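/- arXiv:1805.01560 — 12 statements merged into one kernel-verified Lean document; each statement's English description precedes it below -/
import Mathlib

section
/- Let (X,q) be an asymmetric normed space. If the closed unit ball B_q[0,1] = {x : q(x) ≤ 1} is closed in the topology induced by q, then (X,q) satisfies the separation axiom T3 (regularity without T1). -/
open TopologicalSpace Filter Set Topology

/-- If the closed unit ball of an asymmetric normed space is
closed in the topology induced by `q`, then the space is T3 (regular without T1). -/
theorem stmt_1 {X : Type*} [AddCommGroup X] [Module ℝ X]
    (q : X → ℝ)
    (hnn : ∀ x, 0 ≤ q x)
    (hhom : ∀ (a : ℝ) (x : X), 0 ≤ a → q (a • x) = a * q x)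
    (htri : ∀ x y, q (x + y) ≤ q x + q y)
    (hsep : ∀ x, q x = 0 → q (-x) = 0 → x = 0)
    [t : TopologicalSpace X]
    (ht : t = TopologicalSpace.generateFrom
      {s : Set X | ∃ (c : X) (ε : ℝ), 0 < ε ∧ s = {y | q (y - c) < ε}})
    (hclosed : IsClosed {x : X | q x ≤ 1}) :
    RegularSpace X := by
  have hq0 : q 0 = 0 := by
    have := hhom 0 (0 : X) le_rfl
    simpa using this
  have htri' : ∀ y x c : X, q (y - c) ≤ q (y - x) + q (x - c) := by
    intro y x c
    have := htri (y - x) (x - c)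
    simpa [sub_add_sub_cancel] using this
  have hB : IsTopologicalBasis
      {s : Set X | ∃ (c : X) (ε : ℝ), 0 < ε ∧ s = {y | q (y - c) < ε}} := by
    refine ⟨?_, ?_, ht⟩
    · rintro s1 ⟨c1, ε1, hε1, rfl⟩ s2 ⟨c2, ε2, hε2, rfl⟩ x ⟨hx1, hx2⟩
      simp only [mem_setOf_eq] at hx1 hx2
      have h1 : 0 < ε1 - q (x - c1) := by linarith
      have h2 : 0 < ε2 - q (x - c2) := by linarith
      refine ⟨{y | q (y - x) < min (ε1 - q (x - c1)) (ε2 - q (x - c2))},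
        ⟨x, _, lt_min h1 h2, rfl⟩, by simp only [mem_setOf_eq, sub_self, hq0]; exact lt_min h1 h2, ?_⟩
      rintro y hy
      simp only [mem_setOf_eq, lt_min_iff] at hy
      have hy1 := htri' y x c1
      have hy2 := htri' y x c2
      exact ⟨by simp only [mem_setOf_eq]; linarith [hy.1],
             by simp only [mem_setOf_eq]; linarith [hy.2]⟩
    · apply eq_univ_of_forall
      intro x
      exact ⟨{y | q (y - x) < 1}, ⟨x, 1, one_pos, rfl⟩, by simp [hq0]⟩
  have hnhds : ∀ x : X, (𝓝 x).HasBasis (fun ε : ℝ => 0 < ε)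
      (fun ε => {y | q (y - x) < ε}) := by
    intro x
    constructor
    intro s
    rw [hB.mem_nhds_iff]
    constructor
    · rintro ⟨u, ⟨c, ε, hε, rfl⟩, hxu, hus⟩
      simp only [mem_setOf_eq] at hxu
      refine ⟨ε - q (x - c), by linarith, fun y hy => hus ?_⟩
      simp only [mem_setOf_eq] at hy ⊢
      have := htri' y x c
      linarith
    · rintro ⟨ε, hε, hsub⟩
      exact ⟨_, ⟨x, ε, hε, rfl⟩, by simp [hq0, hε], hsub⟩
  have hcont : ∀ (a : ℝ), 0 < a → ∀ b : X, Continuous (fun y : X => a • y + b) := by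
    intro a ha b
    rw [ht, continuous_generateFrom_iff]
    rintro s ⟨c, r, hr, rfl⟩
    apply isOpen_generateFrom_of_mem
    refine ⟨a⁻¹ • (c - b), r / a, div_pos hr ha, ?_⟩
    ext y
    simp only [mem_preimage, mem_setOf_eq]
    have hkey : a • y + b - c = a • (y - a⁻¹ • (c - b)) := by
      rw [smul_sub, smul_inv_smul₀ ha.ne']
      abel
    rw [hkey, hhom a _ ha.le, lt_div_iff₀' ha]
  apply RegularSpace.of_exists_mem_nhds_isClosed_subset
  intro x s hs
  rcases (hnhds x).mem_iff.mp hs with ⟨ε, hε, hsub⟩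
  refine ⟨{y | q (y - x) ≤ ε / 2}, ?_, ?_, ?_⟩
  · exact mem_of_superset ((hnhds x).mem_of_mem (half_pos hε))
      (fun y (hy : q (y - x) < ε / 2) => le_of_lt hy)
  · have heq : {y : X | q (y - x) ≤ ε / 2} =
        (fun y : X => (2 / ε) • y + -((2 / ε) • x)) ⁻¹' {z | q z ≤ 1} := by
      ext y
      simp only [mem_preimage, mem_setOf_eq]
      have : (2 / ε) • y + -((2 / ε) • x) = (2 / ε) • (y - x) := by
        rw [smul_sub]; abel
      rw [this, hhom _ _ (by positivity : (0:ℝ) ≤ 2 / ε),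
        div_mul_eq_mul_div, div_le_one hε, le_div_iff₀ (by norm_num : (0:ℝ) < 2),
        mul_comm]
    rw [heq]
    exact hclosed.preimage (hcont _ (by positivity) _)
  · intro y hy
    exact hsub (by simp only [mem_setOf_eq] at hy ⊢; linarith)
end

section
/- An asymmetric normed space (X,q) is Hausdorff if and only if ‖x‖_q > 0 for every x ≠ 0, where ‖x‖_q = inf{q(y) + q(y−x) : y ∈ X}. -/
theorem stmt_6 {X : Type*} [AddCommGroup X] [Module ℝ X]
    (q : X → ℝ)
    (hnn : ∀ x, 0 ≤ q x)
    (hhom : ∀ (a : ℝ) (x : X), 0 ≤ a → q (a • x) = a * q x)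
    (htri : ∀ x y, q (x + y) ≤ q x + q y)
    (hsep : ∀ x, q x = 0 → q (-x) = 0 → x = 0)
    [t : TopologicalSpace X]
    (ht : t = TopologicalSpace.generateFrom
      {s : Set X | ∃ (c : X) (ε : ℝ), 0 < ε ∧ s = {y | q (y - c) < ε}}) :
    T2Space X ↔ ∀ x : X, x ≠ 0 → 0 < ⨅ y : X, (q y + q (y - x)) := by
  have hq0 : q 0 = 0 := by simpa using hhom 0 0 le_rfl
  have bdd : ∀ x : X, BddBelow (Set.range fun y => q y + q (y - x)) := by
    intro x
    refine ⟨0, ?_⟩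
    rintro b ⟨y, rfl⟩
    exact add_nonneg (hnn y) (hnn _)
  -- balls are a neighborhood basis for open sets
  have key : ∀ U : Set X, IsOpen U → ∀ p ∈ U,
      ∃ δ > 0, ∀ y, q (y - p) < δ → y ∈ U := by
    intro U hU
    rw [ht] at hU
    induction hU with
    | basic s hs =>
      obtain ⟨c, ε, hε, rfl⟩ := hs
      intro p hp
      refine ⟨ε - q (p - c), by simpa using hp, fun y hy => ?_⟩
      have : q (y - c) ≤ q (y - p) + q (p - c) := by
        have := htri (y - p) (p - c)
        simpa [sub_add_sub_cancel] using this
      have : q (y - c) < ε := by linarith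
      exact this
    | univ => exact fun p _ => ⟨1, one_pos, fun _ _ => trivial⟩
    | inter u v _ _ ihu ihv =>
      intro p hp
      obtain ⟨δ1, h1, H1⟩ := ihu p hp.1
      obtain ⟨δ2, h2, H2⟩ := ihv p hp.2
      exact ⟨min δ1 δ2, lt_min h1 h2, fun y hy =>
        ⟨H1 y (lt_of_lt_of_le hy (min_le_left _ _)),
         H2 y (lt_of_lt_of_le hy (min_le_right _ _))⟩⟩
    | sUnion S _ ihS =>
      intro p hp
      obtain ⟨s, hsS, hps⟩ := hp
      obtain ⟨δ, hδ, H⟩ := ihS s hsS p hps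
      exact ⟨δ, hδ, fun y hy => ⟨s, hsS, H y hy⟩⟩
  have ball_open : ∀ (c : X) (ε : ℝ), 0 < ε → IsOpen {y | q (y - c) < ε} := by
    intro c ε hε
    rw [ht]
    exact TopologicalSpace.GenerateOpen.basic _ ⟨c, ε, hε, rfl⟩
  constructor
  · intro h2 x hx
    by_contra hle
    push_neg at hle
    obtain ⟨u, v, hu, hv, h0u, hxv, huv⟩ := t2_separation hx.symm
    obtain ⟨δ1, hδ1, H1⟩ := key u hu 0 h0u
    obtain ⟨δ2, hδ2, H2⟩ := key v hv x hxv
    have hlt : (⨅ y : X, (q y + q (y - x))) < min δ1 δ2 :=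
      lt_of_le_of_lt hle (lt_min hδ1 hδ2)
    obtain ⟨y, hy⟩ := exists_lt_of_ciInf_lt hlt
    have hy1 : q y < δ1 := by
      have := hnn (y - x); have := lt_of_lt_of_le hy (min_le_left _ _); linarith
    have hy2 : q (y - x) < δ2 := by
      have := hnn y; have := lt_of_lt_of_le hy (min_le_right _ _); linarith
    have hyu : y ∈ u := H1 y (by simpa using hy1)
    have hyv : y ∈ v := H2 y hy2
    exact (Set.disjoint_left.mp huv hyu) hyv
  · intro h
    refine ⟨fun a b hab => ?_⟩
    set x := a - b with hxdef
    have hx : x ≠ 0 := sub_ne_zero.mpr hab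
    have hr : 0 < ⨅ y : X, (q y + q (y - x)) := h x hx
    set r := ⨅ y : X, (q y + q (y - x)) with hrdef
    refine ⟨{y | q (y - a) < r / 2}, {y | q (y - b) < r / 2},
      ball_open a (r / 2) (by linarith), ball_open b (r / 2) (by linarith),
      by simp [hq0, half_pos hr], by simp [hq0, half_pos hr], ?_⟩
    rw [Set.disjoint_left]
    rintro y hya hyb
    have h1 : q (y - b) + q ((y - b) - x) < r := by
      have e : (y - b) - x = y - a := by simp only [hxdef]; abel
      rw [e]
      have : q (y - a) < r / 2 := hya
      have : q (y - b) < r / 2 := hyb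
      linarith [hya, hyb]
    have h2 : r ≤ q (y - b) + q ((y - b) - x) := ciInf_le (bdd x) (y - b)
    linarith
end

section
/- The map ‖x‖_q = inf{q(y) + q(y−x) : y ∈ X} is a seminorm on X, and it is the greatest seminorm p on X satisfying p(x) ≤ q(x) for all x ∈ X. -/
theorem stmt_7 {X : Type*} [AddCommGroup X] [Module ℝ X]
    (q : X → ℝ)
    (hnn : ∀ x, 0 ≤ q x)
    (hhom : ∀ (a : ℝ) (x : X), 0 ≤ a → q (a • x) = a * q x)
    (htri : ∀ x y, q (x + y) ≤ q x + q y)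
    (hsep : ∀ x, q x = 0 → q (-x) = 0 → x = 0)
    (N : X → ℝ) (hN : ∀ x, N x = ⨅ y : X, (q y + q (y - x))) :
    (∀ (a : ℝ) (x : X), N (a • x) = |a| * N x) ∧
    (∀ x y, N (x + y) ≤ N x + N y) ∧
    (∀ x, N x ≤ q x) ∧
    (∀ p : X → ℝ,
      (∀ (a : ℝ) (x : X), p (a • x) = |a| * p x) →
      (∀ x y, p (x + y) ≤ p x + p y) →
      (∀ x, p x ≤ q x) → ∀ x, p x ≤ N x) := by
  have hq0 : q 0 = 0 := by
    have := hhom 0 0 le_rfl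
    simpa using this
  have hbdd : ∀ x : X, BddBelow (Set.range fun y => q y + q (y - x)) := by
    intro x
    exact ⟨0, by rintro r ⟨y, rfl⟩; exact add_nonneg (hnn y) (hnn (y - x))⟩
  have hNle : ∀ x y : X, N x ≤ q y + q (y - x) := by
    intro x y
    rw [hN x]
    exact ciInf_le (hbdd x) y
  have hleN : ∀ (x : X) (c : ℝ), (∀ y, c ≤ q y + q (y - x)) → c ≤ N x := by
    intro x c h
    rw [hN x]
    exact le_ciInf h
  have hNq : ∀ x, N x ≤ q x := by
    intro x
    have := hNle x x
    simpa [hq0] using this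
  have hNnn : ∀ x, 0 ≤ N x := fun x =>
    hleN x 0 fun y => add_nonneg (hnn y) (hnn (y - x))
  have hN0 : N 0 = 0 := le_antisymm (by simpa [hq0] using hNq 0) (hNnn 0)
  have hNneg : ∀ x, N (-x) = N x := by
    have key : ∀ x, N (-x) ≤ N x := by
      intro x
      refine hleN x (N (-x)) fun y => ?_
      have h := hNle (-x) (y - x)
      have he : y - x - -x = y := by abel
      rw [he] at h
      linarith
    intro x
    refine le_antisymm (key x) ?_
    have := key (-x)
    simpa using this
  have hNhom : ∀ (a : ℝ) (x : X), N (a • x) = |a| * N x := by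
    have hpos : ∀ (a : ℝ), 0 < a → ∀ x, N (a • x) = a * N x := by
      intro a ha x
      refine le_antisymm ?_ ?_
      · rw [hN x, Real.mul_iInf_of_nonneg ha.le]
        refine le_ciInf fun y => ?_
        have h1 : q (a • y) + q (a • y - a • x) = a * (q y + q (y - x)) := by
          rw [← smul_sub, hhom a y ha.le, hhom a _ ha.le, mul_add]
        calc N (a • x) ≤ q (a • y) + q (a • y - a • x) := hNle _ _
          _ = a * (q y + q (y - x)) := h1
      · refine hleN (a • x) _ fun z => ?_
        have hz : z = a • (a⁻¹ • z) := by
          rw [smul_smul, mul_inv_cancel₀ ha.ne', one_smul]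
        have h1 : q z + q (z - a • x) = a * (q (a⁻¹ • z) + q (a⁻¹ • z - x)) := by
          conv_lhs => rw [hz]
          rw [← smul_sub, hhom a _ ha.le, hhom a _ ha.le, mul_add]
        rw [h1]
        exact mul_le_mul_of_nonneg_left (hNle x _) ha.le
    intro a x
    rcases lt_trichotomy a 0 with h | h | h
    · have : a • x = (-a) • (-x) := by simp
      rw [this, hpos (-a) (by linarith) (-x), hNneg, abs_of_neg h]
    · simp [h, hN0]
    · rw [hpos a h x, abs_of_pos h]
  have hNtri : ∀ x y, N (x + y) ≤ N x + N y := by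
    intro x y
    refine le_of_forall_pos_le_add fun ε hε => ?_
    have hx : N x < N x + ε / 2 := by linarith
    have hy : N y < N y + ε / 2 := by linarith
    rw [hN x] at hx
    rw [hN y] at hy
    obtain ⟨z, hz⟩ := exists_lt_of_ciInf_lt hx
    obtain ⟨w, hw⟩ := exists_lt_of_ciInf_lt hy
    rw [← hN x] at hz
    rw [← hN y] at hw
    have h1 : N (x + y) ≤ q (z + w) + q (z + w - (x + y)) := hNle _ _
    have h2 : q (z + w) ≤ q z + q w := htri z w
    have h3 : q (z + w - (x + y)) ≤ q (z - x) + q (w - y) := by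
      have := htri (z - x) (w - y)
      have he : z - x + (w - y) = z + w - (x + y) := by abel
      rwa [he] at this
    linarith
  refine ⟨hNhom, hNtri, hNq, ?_⟩
  intro p phom ptri pq x
  refine hleN x (p x) fun y => ?_
  have hpneg : p (y - x) = p (x - y) := by
    have : p ((-1 : ℝ) • (x - y)) = |(-1 : ℝ)| * p (x - y) := phom (-1) (x - y)
    simpa [neg_sub] using this
  have : p x ≤ p y + p (x - y) := by
    have := ptri y (x - y)
    simpa using this
  calc p x ≤ p y + p (x - y) := this
    _ = p y + p (y - x) := by rw [hpneg]
    _ ≤ q y + q (y - x) := add_le_add (pq y) (pq (y - x))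
end

section
/- Let (X,q) be an asymmetric normed space. If the open unit ball B_q(0,1) is bounded with respect to the norm q^s(x) = max{q(x), q(−x)}, then q and q^s are equivalent, i.e., there exist M, N > 0 such that M·q^s(x) ≤ q(x) ≤ N·q^s(x) for all x ∈ X. -/
theorem stmt_8 {X : Type*} [AddCommGroup X] [Module ℝ X]
    (q : X → ℝ)
    (hnn : ∀ x, 0 ≤ q x)
    (hhom : ∀ (a : ℝ) (x : X), 0 ≤ a → q (a • x) = a * q x)
    (htri : ∀ x y, q (x + y) ≤ q x + q y)
    (hsep : ∀ x, q x = 0 → q (-x) = 0 → x = 0)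
    (hbdd : ∃ r : ℝ, ∀ x : X, q x < 1 → max (q x) (q (-x)) < r) :
    ∃ M N : ℝ, 0 < M ∧ 0 < N ∧
      ∀ x : X, M * max (q x) (q (-x)) ≤ q x ∧ q x ≤ N * max (q x) (q (-x)) := by
  obtain ⟨r, hr⟩ := hbdd
  have hq0 : q 0 = 0 := by
    have := hhom 0 0 le_rfl
    simpa using this
  have hrpos : 0 < r := by
    have := hr 0 (by rw [hq0]; norm_num)
    simpa [hq0] using this
  set C : ℝ := max 1 (2 * r) with hC
  have hC1 : (1 : ℝ) ≤ C := le_max_left _ _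
  have hCpos : 0 < C := lt_of_lt_of_le one_pos hC1
  refine ⟨C⁻¹, 1, inv_pos.mpr hCpos, one_pos, fun x => ?_⟩
  have key : max (q x) (q (-x)) ≤ C * q x := by
    rcases eq_or_lt_of_le (hnn x) with h0 | hpos
    · -- q x = 0, show x = 0
      have hqneg : q (-x) = 0 := by
        by_contra hne
        have hqn : 0 < q (-x) := lt_of_le_of_ne (hnn (-x)) (Ne.symm hne)
        -- pick t large: t = r / q(-x)
        set t : ℝ := r / q (-x)
        have ht : 0 ≤ t := le_of_lt (div_pos hrpos hqn)
        have h1 : q (t • x) < 1 := by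
          rw [hhom t x ht, ← h0]; norm_num
        have h2 := hr (t • x) h1
        have h3 : q (-(t • x)) = t * q (-x) := by
          rw [← smul_neg]; exact hhom t (-x) ht
        have h4 : t * q (-x) = r := div_mul_cancel₀ r (ne_of_gt hqn)
        have h5 : r ≤ max (q (t • x)) (q (-(t • x))) := by
          rw [h3, h4]; exact le_max_right _ _
        exact absurd (lt_of_le_of_lt h5 h2) (lt_irrefl r)
      have hx0 : x = 0 := hsep x h0.symm hqneg
      simp [hx0, hq0]
    · -- q x > 0
      have hqn : q (-x) ≤ 2 * r * q x := by
        set a : ℝ := 1 / (2 * q x)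
        have ha : 0 ≤ a := by positivity
        have h1 : q (a • x) < 1 := by
          rw [hhom a x ha, div_mul_eq_mul_div, one_mul,
            div_lt_one (by positivity)]
          linarith
        have h2 := hr (a • x) h1
        have h3 : q (-(a • x)) = a * q (-x) := by
          rw [← smul_neg]; exact hhom a (-x) ha
        have h4 : a * q (-x) < r :=
          h3 ▸ lt_of_le_of_lt (le_max_right _ _) h2
        rw [div_mul_eq_mul_div, one_mul, div_lt_iff₀ (by positivity)] at h4
        linarith
      have h5 : q x ≤ C * q x :=
        le_mul_of_one_le_left (hnn x) hC1
      have h6 : 2 * r * q x ≤ C * q x :=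
        mul_le_mul_of_nonneg_right (le_max_right _ _) (hnn x)
      exact max_le h5 (hqn.trans h6)
  constructor
  · rw [inv_mul_le_iff₀ hCpos]
    linarith [key]
  · rw [one_mul]
    exact le_max_left _ _
end

section
/- Let (X,q) be a T1 asymmetric normed space. If the closed unit ball B_q[0,1] is compact in the topology induced by q, then B_q[0,1] is bounded with respect to the norm q^s(x) = max{q(x), q(−x)}, the topology of q coincides with the norm topology of q^s, and X is finite-dimensional as a vector space. -/
section Aux
variable {X : Type*} [AddCommGroup X] [Module ℝ X] (q : X → ℝ)
    (hnn : ∀ x, 0 ≤ q x)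
    (hhom : ∀ (a : ℝ) (x : X), 0 ≤ a → q (a • x) = a * q x)
    (htri : ∀ x y, q (x + y) ≤ q x + q y)

include hhom in
lemma q_zero : q 0 = 0 := by
  have := hhom 0 0 le_rfl
  simpa using this

include hhom in
lemma q_smul_abs (a : ℝ) (x : X) : q (a • x) ≤ |a| * max (q x) (q (-x)) := by
  rcases le_or_gt 0 a with h|h
  · rw [hhom a x h, abs_of_nonneg h]
    exact mul_le_mul_of_nonneg_left (le_max_left _ _) h
  · have : a • x = (-a) • (-x) := by simp
    rw [this, hhom (-a) (-x) (by linarith), abs_of_neg h]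
    exact mul_le_mul_of_nonneg_left (le_max_right _ _) (by linarith)

include hhom htri in
lemma q_sum {ι : Type*} (s : Finset ι) (f : ι → X) :
    q (∑ i ∈ s, f i) ≤ ∑ i ∈ s, q (f i) := by
  classical
  induction s using Finset.induction_on with
  | empty => simp [q_zero q hhom]
  | insert _ _ h ih =>
      rw [Finset.sum_insert h, Finset.sum_insert h]
      exact (htri _ _).trans (by linarith)

include hnn hhom htri in
lemma q_upper {ι : Type*} [Fintype ι] (b : Module.Basis ι ℝ X) :
    ∃ Cu : ℝ, 0 < Cu ∧ ∀ x, q x ≤ Cu * ‖b.equivFun x‖ := by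
  classical
  set qs : X → ℝ := fun x => max (q x) (q (-x)) with hqs
  have hqs_nonneg : ∀ x, 0 ≤ qs x := fun x => le_trans (hnn x) (le_max_left _ _)
  set Cu : ℝ := (∑ i, qs (b i)) + 1 with hCu
  have hsum_nn : 0 ≤ ∑ i, qs (b i) := Finset.sum_nonneg fun i _ => hqs_nonneg _
  refine ⟨Cu, by simp only [hCu]; linarith, fun x => ?_⟩
  have hrep : x = ∑ i, (b.equivFun x i) • b i := (b.sum_equivFun x).symm
  calc q x = q (∑ i, (b.equivFun x i) • b i) := by rw [← hrep]
    _ ≤ ∑ i, q ((b.equivFun x i) • b i) := q_sum q hhom htri _ _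
    _ ≤ ∑ i, |b.equivFun x i| * qs (b i) := by
        refine Finset.sum_le_sum fun i _ => ?_
        exact q_smul_abs q hhom _ _
    _ ≤ ∑ i, ‖b.equivFun x‖ * qs (b i) := by
        refine Finset.sum_le_sum fun i _ => ?_
        exact mul_le_mul_of_nonneg_right
          (by simpa using norm_le_pi_norm (b.equivFun x) i) (hqs_nonneg _)
    _ = (∑ i, qs (b i)) * ‖b.equivFun x‖ := by
        rw [Finset.sum_mul]
        exact Finset.sum_congr rfl fun i _ => mul_comm _ _
    _ ≤ Cu * ‖b.equivFun x‖ := by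
        refine mul_le_mul_of_nonneg_right ?_ (norm_nonneg _)
        simp only [hCu]; linarith

include hnn hhom htri in
set_option maxHeartbeats 1000000 in
lemma findim [t : TopologicalSpace X]
    (ht : t = TopologicalSpace.generateFrom
      {s : Set X | ∃ (c : X) (ε : ℝ), 0 < ε ∧ s = {y | q (y - c) < ε}})
    (hzero : ∀ x, q x = 0 → x = 0)
    (hcpt : IsCompact {x : X | q x ≤ 1}) : FiniteDimensional ℝ X := by
  classical
  have hq0 : q 0 = 0 := q_zero q hhom
  -- balls are open
  have hball_open : ∀ (c : X) (ε : ℝ), 0 < ε → IsOpen {y | q (y - c) < ε} := by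
    intro c ε hε
    rw [ht]
    exact TopologicalSpace.GenerateOpen.basic _ ⟨c, ε, hε, rfl⟩
  -- finite subcover
  have hcover : {x : X | q x ≤ 1} ⊆ ⋃ c : X, {y | q (y - c) < 1/2} := by
    intro x hx
    exact Set.mem_iUnion.2 ⟨x, by simp [hq0]⟩
  obtain ⟨F, hF⟩ := hcpt.elim_finite_subcover (fun c : X => {y | q (y - c) < 1/2})
    (fun c => hball_open c _ (by norm_num)) hcover
  set V : Submodule ℝ X := Submodule.span ℝ (F : Set X) with hV
  haveI hVfd : FiniteDimensional ℝ V := FiniteDimensional.span_of_finite ℝ F.finite_toSet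
  -- pick function
  set pick : X → X := fun x =>
    if h : ∃ f, f ∈ F ∧ q (x - f) < 1/2 then h.choose else 0 with hpick
  have hpickF : ∀ x, q x ≤ 1 → pick x ∈ F ∧ q (x - pick x) < 1/2 := by
    intro x hx
    have h : ∃ f, f ∈ F ∧ q (x - f) < 1/2 := by
      have := hF hx
      simp only [Set.mem_iUnion] at this
      obtain ⟨f, hf1, hf2⟩ := this
      exact ⟨f, hf1, hf2⟩
    simp only [hpick, dif_pos h]
    exact ⟨h.choose_spec.1, h.choose_spec.2⟩
  have hpickins : ∀ x, pick x ∈ insert (0:X) F := by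
    intro x
    by_cases h : ∃ f, f ∈ F ∧ q (x - f) < 1/2
    · simp only [hpick, dif_pos h]
      exact Finset.mem_insert_of_mem h.choose_spec.1
    · simp only [hpick, dif_neg h]
      exact Finset.mem_insert_self _ _
  have hinsV : ∀ x ∈ insert (0:X) F, x ∈ V := by
    intro x hx
    rcases Finset.mem_insert.1 hx with rfl | hx
    · exact V.zero_mem
    · exact Submodule.subset_span hx
  have hpickV : ∀ x, pick x ∈ V := fun x => hinsV _ (hpickins x)
  -- the embedding of V into coordinates
  set k0 := Module.finrank ℝ V with hk0
  set bb : Module.Basis (Fin k0) ℝ V := Module.finBasis ℝ V with hbb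
  set eV : V ≃ₗ[ℝ] (Fin k0 → ℝ) := bb.equivFun with heV
  set qV : V → ℝ := fun v => q ↑v with hqV
  obtain ⟨Cu, hCupos, hCu⟩ := q_upper (X := V) qV (fun v => hnn _)
    (fun a v _h => by simp only [hqV, Submodule.coe_smul]; exact hhom a _ _h)
    (fun v w => by simp only [hqV, Submodule.coe_add]; exact htri _ _) bb
  -- lift into V
  set w : X → V := fun x => if h : x ∈ V then ⟨x, h⟩ else 0 with hw
  have hw_coe : ∀ x (h : x ∈ V), (↑(w x) : X) = x := by
    intro x h; simp only [hw, dif_pos h]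
  -- bound on elements of F
  set M : ℝ := (insert (0:X) F).sup' ⟨0, Finset.mem_insert_self _ _⟩
    (fun f => ‖eV (w f)‖) with hM
  have hMle : ∀ f ∈ insert (0:X) F, ‖eV (w f)‖ ≤ M := fun f hf =>
    Finset.le_sup' (f := fun f => ‖eV (w f)‖) hf
  have hM0 : 0 ≤ M := le_trans (norm_nonneg _) (hMle 0 (Finset.mem_insert_self _ _))
  -- it suffices to show B ⊆ V
  suffices hBV : ∀ y, q y ≤ 1 → y ∈ V by
    have htop : V = ⊤ := by
      rw [eq_top_iff]
      intro x _
      have hc : (0:ℝ) < q x + 1 := by have := hnn x; linarith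
      have h1 : q ((q x + 1)⁻¹ • x) ≤ 1 := by
        rw [hhom _ _ (inv_pos.2 hc).le]
        rw [inv_mul_le_iff₀ hc]
        have := hnn x; linarith
      have h2 := hBV _ h1
      have h3 : (q x + 1) • ((q x + 1)⁻¹ • x) ∈ V := V.smul_mem _ h2
      rwa [smul_smul, mul_inv_cancel₀ hc.ne', one_smul] at h3
    exact Module.Finite.equiv (LinearEquiv.ofTop V htop)
  -- main argument
  intro y hy
  -- iterated approximation sequence
  set bseq : ℕ → X := fun n => Nat.rec y (fun _ x => (2:ℝ) • (x - pick x)) n with hbseq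
  have hbsucc : ∀ n, bseq (n+1) = (2:ℝ) • (bseq n - pick (bseq n)) := fun n => rfl
  have hbB : ∀ n, q (bseq n) ≤ 1 := by
    intro n
    induction n with
    | zero => exact hy
    | succ n ih =>
        rw [hbsucc, hhom 2 _ (by norm_num)]
        have := (hpickF _ ih).2
        linarith
  -- partial sums
  set S : ℕ → X := fun n => ∑ k ∈ Finset.range n, ((1/2:ℝ))^k • pick (bseq k) with hS
  have hkey : ∀ n, y = S n + ((1/2:ℝ))^n • bseq n := by
    intro n
    induction n with
    | zero =>
        simp only [hS, Finset.range_zero, Finset.sum_empty, pow_zero, one_smul, zero_add]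
        rfl
    | succ n ih =>
        have h2 : ((1/2:ℝ))^(n+1) • bseq (n+1)
            = (1/2:ℝ)^n • bseq n - (1/2:ℝ)^n • pick (bseq n) := by
          rw [hbsucc, smul_smul]
          have hc : ((1/2:ℝ))^(n+1) * 2 = (1/2:ℝ)^n := by ring
          rw [hc, smul_sub]
        nth_rewrite 1 [ih]
        simp only [hS, Finset.sum_range_succ]
        rw [h2]
        abel
  have happrox : ∀ n, q (y - S n) ≤ ((1/2:ℝ))^n := by
    intro n
    have : y - S n = ((1/2:ℝ))^n • bseq n := by rw [hkey n]; abel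
    rw [this, hhom _ _ (pow_nonneg (by norm_num) n)]
    have := hbB n
    nlinarith [pow_pos (by norm_num : (0:ℝ) < 1/2) n]
  -- members of V
  set v : ℕ → V := fun k => w (pick (bseq k)) with hv
  have hv_coe : ∀ k, (↑(v k) : X) = pick (bseq k) := fun k => hw_coe _ (hpickV _)
  set sV : ℕ → V := fun n => ∑ k ∈ Finset.range n, ((1/2:ℝ))^k • v k with hsV
  have hsV_coe : ∀ n, (↑(sV n) : X) = S n := by
    intro n
    simp only [hsV, hS, Submodule.coe_sum, Submodule.coe_smul]
    exact Finset.sum_congr rfl fun k _ => by rw [hv_coe]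
  -- coordinates and convergence
  set g : ℕ → (Fin k0 → ℝ) := fun k => ((1/2:ℝ))^k • eV (v k) with hg
  have hgsum : Summable g := by
    refine Summable.of_norm_bounded (g := fun k => M * (1/2:ℝ)^k) ?_ ?_
    · exact (summable_geometric_of_lt_one (by norm_num) (by norm_num)).mul_left M
    · intro k
      have h2 : ‖eV (v k)‖ ≤ M := hMle _ (hpickins (bseq k))
      have h1 : ‖g k‖ = (1/2:ℝ)^k * ‖eV (v k)‖ := by
        simp only [hg, norm_smul, Real.norm_eq_abs, abs_pow]
        rw [abs_of_nonneg (by norm_num : (0:ℝ) ≤ 1/2)]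
      rw [h1]
      nlinarith [pow_nonneg (by norm_num : (0:ℝ) ≤ 1/2) k, norm_nonneg (eV (v k))]
  have hgP : ∀ n, eV (sV n) = ∑ k ∈ Finset.range n, g k := by
    intro n
    simp only [hsV, map_sum, map_smul, hg]
  set climit : Fin k0 → ℝ := ∑' k, g k with hcinf
  have htend : Filter.Tendsto (fun n => ∑ k ∈ Finset.range n, g k)
      Filter.atTop (nhds climit) := hgsum.hasSum.tendsto_sum_nat
  set s : V := eV.symm climit with hs
  -- y = ↑s
  have hbound : ∀ n, q (y - ↑s) ≤ ((1/2:ℝ))^n + Cu * ‖eV (sV n) - climit‖ := by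
    intro n
    have h1 : q (y - ↑s) ≤ q (y - S n) + q (S n - ↑s) := by
      have heq : (y - S n) + (S n - ↑s) = y - ↑s := by abel
      rw [← heq]; exact htri _ _
    have h2 : q (S n - ↑s) ≤ Cu * ‖eV (sV n) - climit‖ := by
      have hcoe : S n - (↑s : X) = ↑(sV n - s) := by
        rw [Submodule.coe_sub, hsV_coe]
      rw [hcoe]
      have := hCu (sV n - s)
      rwa [map_sub, hs, LinearEquiv.apply_symm_apply] at this
    have := happrox n
    linarith
  have hlim : Filter.Tendsto (fun n => ((1/2:ℝ))^n + Cu * ‖eV (sV n) - climit‖)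
      Filter.atTop (nhds 0) := by
    have h1 : Filter.Tendsto (fun n => ((1/2:ℝ))^n) Filter.atTop (nhds 0) :=
      tendsto_pow_atTop_nhds_zero_of_lt_one (by norm_num) (by norm_num)
    have h2 : Filter.Tendsto (fun n => ‖eV (sV n) - climit‖) Filter.atTop (nhds 0) := by
      have : Filter.Tendsto (fun n => eV (sV n)) Filter.atTop (nhds climit) := by
        simpa only [← hgP] using htend
      simpa using (tendsto_iff_norm_sub_tendsto_zero.1 this)
    have := h1.add (h2.const_mul Cu)
    simpa using this
  have hq0' : q (y - ↑s) ≤ 0 := ge_of_tendsto' hlim hbound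
  have : y - ↑s = 0 := hzero _ (le_antisymm hq0' (hnn _))
  have : y = ↑s := by rwa [sub_eq_zero] at this
  rw [this]
  exact s.2

include hnn hhom htri in
lemma normequiv [FiniteDimensional ℝ X] (hzero : ∀ x, q x = 0 → x = 0) :
    ∃ C : ℝ, 0 < C ∧ ∀ x, max (q x) (q (-x)) ≤ C * q x := by
  classical
  set n := Module.finrank ℝ X with hn
  set b : Module.Basis (Fin n) ℝ X := Module.finBasis ℝ X with hb
  set e : X ≃ₗ[ℝ] (Fin n → ℝ) := b.equivFun with he
  set qs : X → ℝ := fun x => max (q x) (q (-x)) with hqs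
  have hqs_nonneg : ∀ x, 0 ≤ qs x := fun x => le_trans (hnn x) (le_max_left _ _)
  -- upper bound
  set Cu : ℝ := (∑ i, qs (b i)) + 1 with hCu
  have hsum_nn : 0 ≤ ∑ i, qs (b i) := Finset.sum_nonneg fun i _ => hqs_nonneg _
  have hCupos : 0 < Cu := by simp only [hCu]; linarith
  have hupper0 : ∀ x : X, q x ≤ Cu * ‖e x‖ := by
    intro x
    have hrep : x = ∑ i, (e x i) • b i := by
      simpa [he] using (b.sum_equivFun x).symm
    calc q x = q (∑ i, (e x i) • b i) := by rw [← hrep]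
      _ ≤ ∑ i, q ((e x i) • b i) := q_sum q hhom htri _ _
      _ ≤ ∑ i, |e x i| * qs (b i) := by
          refine Finset.sum_le_sum fun i _ => ?_
          exact q_smul_abs q hhom _ _
      _ ≤ ∑ i, ‖e x‖ * qs (b i) := by
          refine Finset.sum_le_sum fun i _ => ?_
          exact mul_le_mul_of_nonneg_right
            (by simpa using norm_le_pi_norm (e x) i) (hqs_nonneg _)
      _ = (∑ i, qs (b i)) * ‖e x‖ := by
          rw [Finset.sum_mul]
          exact Finset.sum_congr rfl fun i _ => mul_comm _ _
      _ ≤ Cu * ‖e x‖ := by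
          refine mul_le_mul_of_nonneg_right ?_ (norm_nonneg _)
          simp only [hCu]; linarith
  have hupper : ∀ x : X, qs x ≤ Cu * ‖e x‖ := by
    intro x
    refine max_le (hupper0 x) ?_
    have := hupper0 (-x)
    rwa [map_neg, norm_neg] at this
  -- Q is Lipschitz hence continuous
  set Q : (Fin n → ℝ) → ℝ := fun u => q (e.symm u) with hQ
  have hQle : ∀ u v : (Fin n → ℝ), Q u ≤ Q v + Cu * ‖u - v‖ := by
    intro u v
    have heq : e.symm v + e.symm (u - v) = e.symm u := by
      rw [← map_add]; congr 1; abel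
    have h1 : Q u ≤ Q v + q (e.symm (u - v)) := by
      simp only [hQ]; rw [← heq]; exact htri _ _
    have h2 : q (e.symm (u - v)) ≤ Cu * ‖u - v‖ := by
      have := hupper0 (e.symm (u - v))
      rwa [LinearEquiv.apply_symm_apply] at this
    linarith
  have hQcont : Continuous Q := by
    have hlip : LipschitzWith (Real.toNNReal Cu) Q := by
      refine LipschitzWith.of_dist_le_mul fun u v => ?_
      rw [Real.dist_eq, Real.coe_toNNReal _ hCupos.le, dist_eq_norm, abs_le]
      have h1 := hQle u v
      have h2 := hQle v u
      rw [norm_sub_rev] at h2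
      constructor <;> linarith
    exact hlip.continuous
  -- lower bound
  rcases subsingleton_or_nontrivial X with hX | hX
  · refine ⟨1, one_pos, fun x => ?_⟩
    have hx0 : x = 0 := Subsingleton.elim _ _
    simp [hx0, q_zero q hhom]
  · have hnpos : 0 < n := Module.finrank_pos
    haveI : Nontrivial (Fin n → ℝ) := e.symm.toEquiv.nontrivial
    have hsph : (Metric.sphere (0 : Fin n → ℝ) 1).Nonempty := by
      exact NormedSpace.sphere_nonempty.2 zero_le_one
    have hcpt : IsCompact (Metric.sphere (0 : Fin n → ℝ) 1) := isCompact_sphere 0 1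
    obtain ⟨u0, hu0mem, hu0min⟩ := hcpt.exists_isMinOn hsph hQcont.continuousOn
    have hmpos : 0 < Q u0 := by
      rcases lt_or_eq_of_le (hnn (e.symm u0)) with h | h
      · exact h
      · exfalso
        have : e.symm u0 = 0 := hzero _ h.symm
        have : u0 = 0 := by
          have := congrArg e this
          simpa using this
        rw [this] at hu0mem
        simp at hu0mem
    set m := Q u0 with hm
    have hlower : ∀ x : X, m * ‖e x‖ ≤ q x := by
      intro x
      rcases eq_or_ne x 0 with rfl | hx
      · simp [q_zero q hhom]
      · have hnx : e x ≠ 0 := by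
          simp only [ne_eq, LinearEquiv.map_eq_zero_iff]; exact hx
        have hnorm : 0 < ‖e x‖ := norm_pos_iff.2 hnx
        set u : Fin n → ℝ := ‖e x‖⁻¹ • (e x) with hu
        have humem : u ∈ Metric.sphere (0 : Fin n → ℝ) 1 := by
          simp [hu, norm_smul, abs_of_pos (inv_pos.2 hnorm),
            inv_mul_cancel₀ hnorm.ne']
        have hQu : m ≤ Q u := hu0min humem
        have : Q u = ‖e x‖⁻¹ * q x := by
          simp only [hQ, hu, map_smul]
          rw [hhom _ _ (inv_pos.2 hnorm).le]
          congr 2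
          exact e.symm_apply_apply x
        rw [this] at hQu
        have h2 := mul_le_mul_of_nonneg_right hQu hnorm.le
        have hc : ‖e x‖⁻¹ * q x * ‖e x‖ = q x := by field_simp
        rw [hc] at h2
        exact h2
    refine ⟨Cu / m, div_pos hCupos hmpos, fun x => ?_⟩
    calc qs x ≤ Cu * ‖e x‖ := hupper x
      _ = (Cu / m) * (m * ‖e x‖) := by field_simp
      _ ≤ (Cu / m) * q x := by
          refine mul_le_mul_of_nonneg_left (hlower x) ?_
          positivity


end Aux


theorem stmt_9 {X : Type*} [AddCommGroup X] [Module ℝ X]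
    (q : X → ℝ)
    (hnn : ∀ x, 0 ≤ q x)
    (hhom : ∀ (a : ℝ) (x : X), 0 ≤ a → q (a • x) = a * q x)
    (htri : ∀ x y, q (x + y) ≤ q x + q y)
    (hsep : ∀ x, q x = 0 → q (-x) = 0 → x = 0)
    [t : TopologicalSpace X]
    (ht : t = TopologicalSpace.generateFrom
      {s : Set X | ∃ (c : X) (ε : ℝ), 0 < ε ∧ s = {y | q (y - c) < ε}})
    (hT1 : T1Space X)
    (hcpt : IsCompact {x : X | q x ≤ 1}) :
    (∃ r : ℝ, ∀ x : X, q x ≤ 1 → max (q x) (q (-x)) ≤ r) ∧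
    (t = TopologicalSpace.generateFrom
      {s : Set X | ∃ (c : X) (ε : ℝ), 0 < ε ∧
        s = {y | max (q (y - c)) (q (-(y - c))) < ε}}) ∧
    FiniteDimensional ℝ X := by
  classical
  have hq0 : q 0 = 0 := q_zero q hhom
  set S1 : Set (Set X) := {s : Set X | ∃ (c : X) (ε : ℝ), 0 < ε ∧ s = {y | q (y - c) < ε}}
    with hS1
  -- T1 implies q is definite
  have hzero : ∀ x, q x = 0 → x = 0 := by
    intro x hx
    by_contra hne
    obtain ⟨U, hUopen, h0U, hxU⟩ :=
      (t1Space_iff_exists_open.1 hT1) (show (0:X) ≠ x from fun h => hne h.symm)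
    rw [ht] at hUopen
    have key : ∀ W, TopologicalSpace.GenerateOpen S1 W → (0 : X) ∈ W → x ∈ W := by
      intro W hW
      induction hW with
      | basic s hs =>
          intro h0
          obtain ⟨c, ε, hε, rfl⟩ := hs
          simp only [Set.mem_setOf_eq] at h0 ⊢
          have h1 : q (x - c) ≤ q x + q (0 - c) := by
            have := htri x (0 - c)
            have h : x + (0 - c) = x - c := by abel
            rwa [h] at this
          rw [hx] at h1
          linarith
      | univ => intro _; trivial
      | inter s₁ s₂ _ _ ih1 ih2 => intro h; exact ⟨ih1 h.1, ih2 h.2⟩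
      | sUnion ss _ ih =>
          rintro ⟨s, hsS, h0s⟩
          exact ⟨s, hsS, ih s hsS h0s⟩
    exact hxU (key U hUopen h0U)
  -- finite dimensionality
  have hfd : FiniteDimensional ℝ X := findim q hnn hhom htri ht hzero hcpt
  obtain ⟨C, hCpos, hC⟩ := normequiv q hnn hhom htri hzero
  set C' : ℝ := max C 1 with hC'
  have hC'pos : (0:ℝ) < C' := lt_of_lt_of_le one_pos (le_max_right _ _)
  have hC'ge : ∀ x, max (q x) (q (-x)) ≤ C' * q x := fun x =>
    (hC x).trans (mul_le_mul_of_nonneg_right (le_max_left _ _) (hnn x))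
  set qs : X → ℝ := fun x => max (q x) (q (-x)) with hqs
  have hqs0 : qs 0 = 0 := by simp [hqs, hq0]
  have hqs_tri : ∀ a b : X, qs (a + b) ≤ qs a + qs b := by
    intro a b
    refine max_le ((htri a b).trans ?_) ?_
    · exact add_le_add (le_max_left _ _) (le_max_left _ _)
    · have : -(a + b) = (-a) + (-b) := by abel
      rw [this]
      exact (htri _ _).trans (add_le_add (le_max_right _ _) (le_max_right _ _))
  have hq_le_qs : ∀ a : X, q a ≤ qs a := fun a => le_max_left _ _
  have hqs_nn : ∀ a : X, 0 ≤ qs a := fun a => (hnn a).trans (hq_le_qs a)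
  set S2 : Set (Set X) := {s : Set X | ∃ (c : X) (ε : ℝ), 0 < ε ∧
      s = {y | max (q (y - c)) (q (-(y - c))) < ε}} with hS2
  refine ⟨⟨C', fun x hx => (hC'ge x).trans (by nlinarith)⟩, ?_, hfd⟩
  -- topology equality
  rw [ht]
  apply le_antisymm
  · -- generateFrom S1 ≤ generateFrom S2 : each S2 ball is S1-open
    apply le_generateFrom
    rintro s ⟨c, ε, hε, rfl⟩
    set U : Set X := {y | max (q (y - c)) (q (-(y - c))) < ε} with hU
    set δ : X → ℝ := fun y => (ε - qs (y - c)) / C' with hδ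
    have hδpos : ∀ y ∈ U, 0 < δ y := by
      intro y hy
      have : qs (y - c) < ε := hy
      exact div_pos (by linarith) hC'pos
    have hUeq : U = ⋃₀ ((fun y => {z | q (z - y) < δ y}) '' U) := by
      ext z
      constructor
      · intro hz
        exact ⟨_, Set.mem_image_of_mem _ hz, by
          simp only [Set.mem_setOf_eq, sub_self, hq0]; exact hδpos z hz⟩
      · rintro ⟨_, ⟨y, hy, rfl⟩, hzball⟩
        have h1 : q (z - y) < δ y := hzball
        have h2 : qs (z - y) ≤ C' * q (z - y) := hC'ge _
        have h3 : qs (z - y) < ε - qs (y - c) := by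
          have := mul_lt_mul_of_pos_left h1 hC'pos
          rw [hδ] at this
          have h4 : C' * ((ε - qs (y - c)) / C') = ε - qs (y - c) := by
            field_simp
          nlinarith
        have h5 : qs (z - c) ≤ qs (z - y) + qs (y - c) := by
          have heq : (z - y) + (y - c) = z - c := by abel
          rw [← heq]
          exact hqs_tri _ _
        show qs (z - c) < ε
        linarith
    rw [hUeq]
    exact TopologicalSpace.GenerateOpen.sUnion _ (by
      rintro s ⟨y, hy, rfl⟩
      exact TopologicalSpace.GenerateOpen.basic _ ⟨y, δ y, hδpos y hy, rfl⟩)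
  · -- generateFrom S2 ≤ generateFrom S1 : each S1 ball is S2-open
    apply le_generateFrom
    rintro s ⟨c, ε, hε, rfl⟩
    set U : Set X := {y | q (y - c) < ε} with hU
    set δ : X → ℝ := fun y => ε - q (y - c) with hδ
    have hUeq : U = ⋃₀ ((fun y => {z | qs (z - y) < δ y}) '' U) := by
      ext z
      constructor
      · intro hz
        have hzU : q (z - c) < ε := hz
        exact ⟨_, Set.mem_image_of_mem _ hz, by
          simp only [Set.mem_setOf_eq, sub_self, hqs0, hδ]; linarith⟩
      · rintro ⟨_, ⟨y, hy, rfl⟩, hzball⟩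
        have h1 : qs (z - y) < δ y := hzball
        have h2 : q (z - c) ≤ q (z - y) + q (y - c) := by
          have heq : (z - y) + (y - c) = z - c := by abel
          rw [← heq]
          exact htri _ _
        have h3 := hq_le_qs (z - y)
        show q (z - c) < ε
        simp only [hδ] at h1
        linarith
    rw [hUeq]
    exact TopologicalSpace.GenerateOpen.sUnion _ (by
      rintro s ⟨y, hy, rfl⟩
      refine TopologicalSpace.GenerateOpen.basic _ ⟨y, δ y, ?_, rfl⟩
      have : q (y - c) < ε := hy
      simp only [hδ]; linarith)
end

section
/- Let (X,q) be an asymmetric normed space and Y a linear subspace. The quotient X/Y with the asymmetric seminorm w_Y(x+Y) = inf{q(x+y) : y ∈ Y} is T1 if and only if Y is closed in the topology induced by q. -/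
/-- Closure characterization in the topology generated by asymmetric balls. -/
lemma ball_char_aux {A : Type*} [AddCommGroup A] (p : A → ℝ)
    (h0 : p 0 = 0) (htri : ∀ a b, p (a + b) ≤ p a + p b)
    [t : TopologicalSpace A]
    (ht : t = TopologicalSpace.generateFrom
      {s : Set A | ∃ (c : A) (ε : ℝ), 0 < ε ∧ s = {y | p (y - c) < ε}})
    (S : Set A) (x : A) :
    x ∈ closure S ↔ ∀ ε > 0, ∃ s ∈ S, p (s - x) < ε := by
  set 𝒮 : Set (Set A) := {s : Set A | ∃ (c : A) (ε : ℝ), 0 < ε ∧ s = {y | p (y - c) < ε}}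
    with h𝒮
  have hopen : ∀ U : Set A, IsOpen U →
      ∀ a ∈ U, ∃ ε > 0, {y | p (y - a) < ε} ⊆ U := by
    intro U hU
    rw [ht] at hU
    replace hU : TopologicalSpace.GenerateOpen 𝒮 U := hU
    induction hU with
    | basic s hs =>
      obtain ⟨c, ε, hε, rfl⟩ := hs
      intro a ha
      refine ⟨ε - p (a - c), sub_pos.mpr ha, fun y hy => ?_⟩
      have hyc : y - c = (y - a) + (a - c) := by abel
      have : p (y - c) ≤ p (y - a) + p (a - c) := by rw [hyc]; exact htri _ _
      have hy' : p (y - a) < ε - p (a - c) := hy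
      show p (y - c) < ε
      linarith
    | univ => exact fun a _ => ⟨1, one_pos, fun y _ => trivial⟩
    | inter s u hs hu ihs ihu =>
      intro a ha
      obtain ⟨ε1, hε1, h1⟩ := ihs a ha.1
      obtain ⟨ε2, hε2, h2⟩ := ihu a ha.2
      refine ⟨min ε1 ε2, lt_min hε1 hε2, fun y hy => ?_⟩
      have hy' : p (y - a) < min ε1 ε2 := hy
      exact ⟨h1 (show p (y - a) < ε1 from lt_of_lt_of_le hy' (min_le_left _ _)),
        h2 (show p (y - a) < ε2 from lt_of_lt_of_le hy' (min_le_right _ _))⟩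
    | sUnion σ hσ ih =>
      intro a ha
      obtain ⟨s, hsσ, has⟩ := ha
      obtain ⟨ε, hε, hsub⟩ := ih s hsσ a has
      exact ⟨ε, hε, hsub.trans (Set.subset_sUnion_of_mem hsσ)⟩
  constructor
  · intro hx ε hε
    have hball : IsOpen {y | p (y - x) < ε} := by
      rw [ht]
      exact TopologicalSpace.GenerateOpen.basic _ ⟨x, ε, hε, rfl⟩
    have hxball : x ∈ {y | p (y - x) < ε} := by
      show p (x - x) < ε
      rw [sub_self, h0]; exact hε
    obtain ⟨s, hs1, hs2⟩ := mem_closure_iff.mp hx _ hball hxball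
    exact ⟨s, hs2, hs1⟩
  · intro h
    rw [mem_closure_iff]
    intro o ho hxo
    obtain ⟨ε, hε, hsub⟩ := hopen o ho x hxo
    obtain ⟨s, hsS, hs⟩ := h ε hε
    exact ⟨s, hsub hs, hsS⟩

theorem stmt_11 {X : Type*} [AddCommGroup X] [Module ℝ X]
    (q : X → ℝ)
    (hnn : ∀ x, 0 ≤ q x)
    (hhom : ∀ (a : ℝ) (x : X), 0 ≤ a → q (a • x) = a * q x)
    (htri : ∀ x y, q (x + y) ≤ q x + q y)
    (hsep : ∀ x, q x = 0 → q (-x) = 0 → x = 0)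
    [t : TopologicalSpace X]
    (ht : t = TopologicalSpace.generateFrom
      {s : Set X | ∃ (c : X) (ε : ℝ), 0 < ε ∧ s = {y | q (y - c) < ε}})
    (Y : Submodule ℝ X)
    (w : (X ⧸ Y) → ℝ)
    (hw : ∀ x : X, w (Submodule.Quotient.mk x) = ⨅ y : Y, q (x + y))
    [tq : TopologicalSpace (X ⧸ Y)]
    (htq : tq = TopologicalSpace.generateFrom
      {s : Set (X ⧸ Y) | ∃ (c : X ⧸ Y) (ε : ℝ), 0 < ε ∧ s = {u | w (u - c) < ε}}) :
    @T1Space (X ⧸ Y) tq ↔ IsClosed (Y : Set X) := by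
  haveI : Nonempty Y := ⟨0⟩
  have hq0 : q 0 = 0 := by
    have := hhom 0 0 le_rfl
    simpa using this
  have hbdd : ∀ z : X, BddBelow (Set.range fun y : Y => q (z + ↑y)) := by
    intro z
    exact ⟨0, by rintro r ⟨y, rfl⟩; exact hnn _⟩
  have hwnn : ∀ u : X ⧸ Y, 0 ≤ w u := by
    intro u
    obtain ⟨x, rfl⟩ := Submodule.Quotient.mk_surjective Y u
    rw [hw]
    exact Real.iInf_nonneg fun y => hnn _
  have hw0 : w 0 = 0 := by
    have h : (0 : X ⧸ Y) = Submodule.Quotient.mk 0 := rfl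
    rw [h, hw]
    refine le_antisymm ?_ (Real.iInf_nonneg fun y => hnn _)
    have := ciInf_le (hbdd 0) (⟨0, Y.zero_mem⟩ : Y)
    simpa [hq0] using this
  have hwtri : ∀ u v : X ⧸ Y, w (u + v) ≤ w u + w v := by
    intro u v
    obtain ⟨x, rfl⟩ := Submodule.Quotient.mk_surjective Y u
    obtain ⟨x', rfl⟩ := Submodule.Quotient.mk_surjective Y v
    rw [← Submodule.Quotient.mk_add, hw, hw, hw]
    have key : ∀ y1 y2 : Y, (⨅ y : Y, q (x + x' + ↑y)) ≤ q (x + ↑y1) + q (x' + ↑y2) := by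
      intro y1 y2
      have h1 : (⨅ y : Y, q (x + x' + ↑y)) ≤ q (x + x' + ↑(y1 + y2)) :=
        ciInf_le (hbdd _) (y1 + y2)
      have h2 : x + x' + (↑y1 + ↑y2 : X) = (x + ↑y1) + (x' + ↑y2) := by abel
      have h3 : q (x + x' + ↑(y1 + y2)) ≤ q (x + ↑y1) + q (x' + ↑y2) := by
        rw [Submodule.coe_add, h2]; exact htri _ _
      linarith
    have step1 : ∀ y1 : Y, (⨅ y : Y, q (x + x' + ↑y)) - q (x + ↑y1) ≤ ⨅ y : Y, q (x' + ↑y) :=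
      fun y1 => le_ciInf fun y2 => by linarith [key y1 y2]
    have step2 : (⨅ y : Y, q (x + x' + ↑y)) - (⨅ y : Y, q (x' + ↑y)) ≤ ⨅ y : Y, q (x + ↑y) :=
      le_ciInf fun y1 => by linarith [step1 y1]
    linarith
  have inf_eq_zero_iff : ∀ x : X,
      ((⨅ y : Y, q (x + ↑y)) = 0 ↔ ∀ ε > 0, ∃ y : Y, q (x + ↑y) < ε) := by
    intro x
    constructor
    · intro h ε hε
      exact exists_lt_of_ciInf_lt (by rw [h]; exact hε)
    · intro h
      refine le_antisymm ?_ (Real.iInf_nonneg fun y => hnn _)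
      by_contra hc
      push_neg at hc
      obtain ⟨y, hy⟩ := h _ hc
      exact absurd (ciInf_le (hbdd x) y) (not_le.mpr hy)
  constructor
  · intro hT1
    apply isClosed_of_closure_subset
    intro x hx
    have hx' := (ball_char_aux q hq0 htri ht (Y : Set X) x).mp hx
    have hz : w (Submodule.Quotient.mk (-x)) = 0 := by
      rw [hw]
      refine (inf_eq_zero_iff (-x)).mpr ?_
      intro ε hε
      obtain ⟨s, hsY, hs⟩ := hx' ε hε
      refine ⟨⟨s, hsY⟩, ?_⟩
      have h2 : -x + s = s - x := by abel
      show q (-x + s) < ε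
      rw [h2]; exact hs
    haveI := hT1
    have hz0 : (Submodule.Quotient.mk (-x) : X ⧸ Y) = 0 := by
      have hc : (0 : X ⧸ Y) ∈ closure {(Submodule.Quotient.mk (-x) : X ⧸ Y)} := by
        rw [ball_char_aux w hw0 hwtri htq]
        intro ε hε
        exact ⟨_, rfl, by rw [sub_zero, hz]; exact hε⟩
      rw [(isClosed_singleton).closure_eq] at hc
      exact hc.symm
    have hmem : -x ∈ Y := (Submodule.Quotient.mk_eq_zero Y).mp hz0
    simpa using Y.neg_mem hmem
  · intro hY
    have hP : ∀ z : X ⧸ Y, w z = 0 → z = 0 := by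
      intro z hz
      obtain ⟨a, rfl⟩ := Submodule.Quotient.mk_surjective Y z
      rw [hw] at hz
      have hmem : -a ∈ closure (Y : Set X) := by
        rw [ball_char_aux q hq0 htri ht]
        intro ε hε
        obtain ⟨y, hy⟩ := (inf_eq_zero_iff a).mp hz ε hε
        refine ⟨y, y.2, ?_⟩
        have h2 : (y : X) - -a = a + y := by abel
        rw [h2]; exact hy
      rw [hY.closure_eq] at hmem
      rw [Submodule.Quotient.mk_eq_zero]
      simpa using Y.neg_mem hmem
    refine ⟨fun u => ?_⟩
    apply isClosed_of_closure_subset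
    intro v hv
    have hv' := (ball_char_aux w hw0 hwtri htq {u} v).mp hv
    have h0' : w (u - v) = 0 := by
      refine le_antisymm ?_ (hwnn _)
      by_contra hc
      push_neg at hc
      obtain ⟨s, hs, hlt⟩ := hv' _ hc
      rw [Set.mem_singleton_iff] at hs
      subst hs
      exact absurd hlt (lt_irrefl _)
    have huv : u = v := sub_eq_zero.mp (hP _ h0')
    exact Set.mem_singleton_iff.mpr huv.symm
end

section
/- Let (X,q) be an asymmetric normed space and Y a linear subspace such that the quotient X/Y (with the quotient asymmetric seminorm w_Y) is T1. Then the q-closure of the linear span of θ_q = {x : q(x)=0} is contained in Y. -/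
theorem stmt_12 {X : Type*} [AddCommGroup X] [Module ℝ X]
    (q : X → ℝ)
    (hnn : ∀ x, 0 ≤ q x)
    (hhom : ∀ (a : ℝ) (x : X), 0 ≤ a → q (a • x) = a * q x)
    (htri : ∀ x y, q (x + y) ≤ q x + q y)
    (hsep : ∀ x, q x = 0 → q (-x) = 0 → x = 0)
    [t : TopologicalSpace X]
    (ht : t = TopologicalSpace.generateFrom
      {s : Set X | ∃ (c : X) (ε : ℝ), 0 < ε ∧ s = {y | q (y - c) < ε}})
    (Y : Submodule ℝ X)
    (w : (X ⧸ Y) → ℝ)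
    (hw : ∀ x : X, w (Submodule.Quotient.mk x) = ⨅ y : Y, q (x + y))
    [tq : TopologicalSpace (X ⧸ Y)]
    (htq : tq = TopologicalSpace.generateFrom
      {s : Set (X ⧸ Y) | ∃ (c : X ⧸ Y) (ε : ℝ), 0 < ε ∧ s = {u | w (u - c) < ε}})
    (hT1 : @T1Space (X ⧸ Y) tq) :
    @closure X t ((Submodule.span ℝ {x : X | q x = 0} : Set X)) ⊆ (Y : Set X) := by
  have hq0 : q 0 = 0 := by simpa using hhom 0 0 le_rfl
  have hbdd : ∀ c : X, BddBelow (Set.range fun y : Y => q (c + ↑y)) := by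
    intro c
    exact ⟨0, by rintro r ⟨y, rfl⟩; exact hnn _⟩
  have hwnn : ∀ u : X ⧸ Y, 0 ≤ w u := by
    intro u
    obtain ⟨a, rfl⟩ := Submodule.Quotient.mk_surjective Y u
    rw [hw]
    exact le_ciInf fun y => hnn _
  have hwle : ∀ (a : X) (y : Y), w (Submodule.Quotient.mk a) ≤ q (a + ↑y) := by
    intro a y
    rw [hw]
    exact ciInf_le (hbdd a) y
  have hwq : ∀ a : X, w (Submodule.Quotient.mk a) ≤ q a := by
    intro a
    simpa using hwle a 0
  -- subadditivity of w
  have hwadd : ∀ u v : X ⧸ Y, w (u + v) ≤ w u + w v := by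
    intro u v
    obtain ⟨a, rfl⟩ := Submodule.Quotient.mk_surjective Y u
    obtain ⟨b, rfl⟩ := Submodule.Quotient.mk_surjective Y v
    apply le_of_forall_pos_le_add
    intro ε hε
    obtain ⟨y1, hy1⟩ : ∃ y : Y, q (a + ↑y) < w (Submodule.Quotient.mk a) + ε / 2 := by
      rw [hw]
      exact exists_lt_of_ciInf_lt (lt_add_of_pos_right _ (by linarith))
    obtain ⟨y2, hy2⟩ : ∃ y : Y, q (b + ↑y) < w (Submodule.Quotient.mk b) + ε / 2 := by
      rw [hw]
      exact exists_lt_of_ciInf_lt (lt_add_of_pos_right _ (by linarith))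
    have h1 : w (Submodule.Quotient.mk a + Submodule.Quotient.mk b)
        ≤ q ((a + b) + ↑(y1 + y2)) := by
      rw [← Submodule.Quotient.mk_add]
      exact hwle _ _
    have heq : (a + b) + ((y1 : X) + (y2 : X)) = (a + ↑y1) + (b + ↑y2) := by abel
    have h2 : q ((a + b) + ↑(y1 + y2)) ≤ q (a + ↑y1) + q (b + ↑y2) := by
      rw [Submodule.coe_add, heq]
      exact htri _ _
    linarith
  -- key T1 consequence
  have hkey : ∀ a b : X ⧸ Y, w (a - b) = 0 → a = b := by
    intro a b hab
    have hmono : ∀ o : Set (X ⧸ Y),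
        TopologicalSpace.GenerateOpen
          {s : Set (X ⧸ Y) | ∃ (c : X ⧸ Y) (ε : ℝ), 0 < ε ∧ s = {u | w (u - c) < ε}} o →
        b ∈ o → a ∈ o := by
      intro o ho
      induction ho with
      | basic s hs =>
        obtain ⟨c, ε, hε, rfl⟩ := hs
        intro hbo
        simp only [Set.mem_setOf_eq] at hbo ⊢
        have h3 : w (a - c) ≤ w (a - b) + w (b - c) := by
          have := hwadd (a - b) (b - c)
          simpa using this
        linarith
      | univ => exact fun _ => trivial
      | inter s u hs hu ihs ihu => exact fun hb => ⟨ihs hb.1, ihu hb.2⟩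
      | sUnion S hS ih =>
        rintro ⟨s, hsS, hbs⟩
        exact ⟨s, hsS, ih s hsS hbs⟩
    have hb : b ∈ closure ({a} : Set (X ⧸ Y)) := by
      rw [mem_closure_iff]
      intro o ho hbo
      rw [htq] at ho
      exact ⟨a, hmono o ho hbo, rfl⟩
    rw [closure_singleton] at hb
    exact hb.symm
  -- θ_q ⊆ Y
  have hθ : {x : X | q x = 0} ⊆ (Y : Set X) := by
    intro x hx
    have h1 : w (Submodule.Quotient.mk x) = 0 :=
      le_antisymm (le_trans (hwq x) (le_of_eq hx)) (hwnn _)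
    have h2 : (Submodule.Quotient.mk x : X ⧸ Y) = 0 := by
      apply hkey
      rw [sub_zero]
      exact h1
    exact (Submodule.Quotient.mk_eq_zero Y).mp h2
  have hspan : Submodule.span ℝ {x : X | q x = 0} ≤ Y := Submodule.span_le.mpr hθ
  -- closure step
  intro x hx
  have hwneg : w (0 - Submodule.Quotient.mk x) = 0 := by
    apply le_antisymm _ (hwnn _)
    apply le_of_forall_pos_le_add
    intro ε hε
    have hball : IsOpen {y : X | q (y - x) < ε} := by
      rw [ht]
      exact TopologicalSpace.GenerateOpen.basic _ ⟨x, ε, hε, rfl⟩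
    have hxmem : x ∈ {y : X | q (y - x) < ε} := by
      simp only [Set.mem_setOf_eq, sub_self, hq0]
      exact hε
    obtain ⟨s, hso, hsspan⟩ := (mem_closure_iff.mp hx) _ hball hxmem
    have hsY : s ∈ Y := hspan hsspan
    have h1 : w (Submodule.Quotient.mk (s - x)) ≤ q (s - x) := hwq _
    have h2 : (Submodule.Quotient.mk (s - x) : X ⧸ Y)
        = 0 - Submodule.Quotient.mk x := by
      rw [Submodule.Quotient.mk_sub, (Submodule.Quotient.mk_eq_zero Y).mpr hsY]
    rw [h2] at h1
    simp only [Set.mem_setOf_eq] at hso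
    linarith
  have h0 : (0 : X ⧸ Y) = Submodule.Quotient.mk x := hkey _ _ hwneg
  exact (Submodule.Quotient.mk_eq_zero Y).mp h0.symm
end

section
/- Let (X,q) be an asymmetric normed space and Y a linear subspace such that the quotient X/Y with the seminorm w_Y is Hausdorff. Then ker‖·‖_q = {x : ‖x‖_q = 0} ⊆ Y, where ‖x‖_q = inf{q(y)+q(y−x) : y ∈ X}. -/
theorem stmt_13 {X : Type*} [AddCommGroup X] [Module ℝ X]
    (q : X → ℝ)
    (hnn : ∀ x, 0 ≤ q x)
    (hhom : ∀ (a : ℝ) (x : X), 0 ≤ a → q (a • x) = a * q x)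
    (htri : ∀ x y, q (x + y) ≤ q x + q y)
    (hsep : ∀ x, q x = 0 → q (-x) = 0 → x = 0)
    [t : TopologicalSpace X]
    (ht : t = TopologicalSpace.generateFrom
      {s : Set X | ∃ (c : X) (ε : ℝ), 0 < ε ∧ s = {y | q (y - c) < ε}})
    (Y : Submodule ℝ X)
    (w : (X ⧸ Y) → ℝ)
    (hw : ∀ x : X, w (Submodule.Quotient.mk x) = ⨅ y : Y, q (x + y))
    [tq : TopologicalSpace (X ⧸ Y)]
    (htq : tq = TopologicalSpace.generateFrom
      {s : Set (X ⧸ Y) | ∃ (c : X ⧸ Y) (ε : ℝ), 0 < ε ∧ s = {u | w (u - c) < ε}})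
    (hT2 : @T2Space (X ⧸ Y) tq) :
    {x : X | (⨅ y : X, (q y + q (y - x))) = 0} ⊆ (Y : Set X) := by
  have hbdd : ∀ a : X, BddBelow (Set.range fun y : Y => q (a + y)) := by
    intro a
    exact ⟨0, by rintro _ ⟨y, rfl⟩; exact hnn _⟩
  -- w is bounded above by q on representatives
  have hwle : ∀ a : X, w (Submodule.Quotient.mk a) ≤ q a := by
    intro a
    rw [hw]
    have := ciInf_le (hbdd a) (0 : Y)
    simpa using this
  -- triangle inequality for w
  have wtri : ∀ A B : X ⧸ Y, w (A + B) ≤ w A + w B := by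
    intro A B
    obtain ⟨a, rfl⟩ := Submodule.Quotient.mk_surjective Y A
    obtain ⟨b, rfl⟩ := Submodule.Quotient.mk_surjective Y B
    rw [← Submodule.Quotient.mk_add, hw, hw, hw]
    refine le_ciInf_add_ciInf ?_
    intro y1 y2
    have h1 : (⨅ y : Y, q (a + b + y)) ≤ q (a + b + (y1 + y2)) :=
      ciInf_le (hbdd _) (y1 + y2)
    have harg : a + b + ((y1 : X) + y2) = (a + (y1 : X)) + (b + (y2 : X)) := by abel
    rw [harg] at h1
    have h3 := htri (a + y1) (b + y2)
    linarith
  -- every generated-open set contains a w-ball around each of its points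
  set S : Set (Set (X ⧸ Y)) :=
    {s : Set (X ⧸ Y) | ∃ (c : X ⧸ Y) (ε : ℝ), 0 < ε ∧ s = {u | w (u - c) < ε}} with hS
  have key : ∀ U : Set (X ⧸ Y), TopologicalSpace.GenerateOpen S U →
      ∀ p ∈ U, ∃ δ > 0, {u | w (u - p) < δ} ⊆ U := by
    intro U hU
    induction hU with
    | basic s hs =>
      obtain ⟨c, ε, hε, rfl⟩ := hs
      intro p hp
      simp only [Set.mem_setOf_eq] at hp
      refine ⟨ε - w (p - c), by linarith, ?_⟩
      intro u hu
      simp only [Set.mem_setOf_eq] at hu ⊢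
      have := wtri (u - p) (p - c)
      rw [sub_add_sub_cancel] at this
      linarith
    | univ => exact fun p _ => ⟨1, one_pos, fun _ _ => trivial⟩
    | inter U V hU hV ihU ihV =>
      intro p hp
      obtain ⟨δ1, hδ1, h1⟩ := ihU p hp.1
      obtain ⟨δ2, hδ2, h2⟩ := ihV p hp.2
      refine ⟨min δ1 δ2, lt_min hδ1 hδ2, ?_⟩
      intro u hu
      simp only [Set.mem_setOf_eq] at hu
      exact ⟨h1 (lt_of_lt_of_le hu (min_le_left _ _)),
             h2 (lt_of_lt_of_le hu (min_le_right _ _))⟩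
    | sUnion 𝒮 h𝒮 ih =>
      intro p hp
      obtain ⟨ts, hts, hpt⟩ := hp
      obtain ⟨δ, hδ, hsub⟩ := ih ts hts p hpt
      exact ⟨δ, hδ, fun u hu => ⟨ts, hts, hsub hu⟩⟩
  -- main argument
  intro x hx
  simp only [Set.mem_setOf_eq] at hx
  by_contra hxY
  have hne : (Submodule.Quotient.mk x : X ⧸ Y) ≠ 0 := by
    simpa [Submodule.Quotient.mk_eq_zero] using hxY
  obtain ⟨U, V, hUo, hVo, hU0, hVx, hdisj⟩ := t2_separation hne.symm
  rw [htq] at hUo hVo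
  have hUg : TopologicalSpace.GenerateOpen S U := hUo
  have hVg : TopologicalSpace.GenerateOpen S V := hVo
  obtain ⟨δ1, hδ1, hball1⟩ := key U hUg 0 hU0
  obtain ⟨δ2, hδ2, hball2⟩ := key V hVg (Submodule.Quotient.mk x) hVx
  have hεpos : 0 < min δ1 δ2 := lt_min hδ1 hδ2
  have hlt : (⨅ y : X, (q y + q (y - x))) < min δ1 δ2 := hx ▸ hεpos
  obtain ⟨y, hy⟩ := exists_lt_of_ciInf_lt hlt
  have hqy : q y < δ1 := by
    have := hnn (y - x)
    have := min_le_left δ1 δ2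
    linarith
  have hqyx : q (y - x) < δ2 := by
    have := hnn y
    have := min_le_right δ1 δ2
    linarith
  have hyU : (Submodule.Quotient.mk y : X ⧸ Y) ∈ U := by
    apply hball1
    simp only [Set.mem_setOf_eq, sub_zero]
    exact lt_of_le_of_lt (hwle y) hqy
  have hyV : (Submodule.Quotient.mk y : X ⧸ Y) ∈ V := by
    apply hball2
    simp only [Set.mem_setOf_eq]
    rw [← Submodule.Quotient.mk_sub]
    exact lt_of_le_of_lt (hwle (y - x)) hqyx
  exact Set.disjoint_left.mp hdisj hyU hyV
end

section
/- Let (X,q) be an asymmetric normed space such that there exist x ∈ X and ε > 0 with B_q(x,ε) ⊆ θ_q = {z : q(z) = 0}. Then every finite open cover of X (in the topology induced by q) contains X itself as one of its members. -/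
theorem stmt_16 {X : Type*} [AddCommGroup X] [Module ℝ X]
    (q : X → ℝ)
    (hnn : ∀ x, 0 ≤ q x)
    (hhom : ∀ (a : ℝ) (x : X), 0 ≤ a → q (a • x) = a * q x)
    (htri : ∀ x y, q (x + y) ≤ q x + q y)
    (hsep : ∀ x, q x = 0 → q (-x) = 0 → x = 0)
    [t : TopologicalSpace X]
    (ht : t = TopologicalSpace.generateFrom
      {s : Set X | ∃ (c : X) (ε : ℝ), 0 < ε ∧ s = {y | q (y - c) < ε}})
    (x : X) (ε : ℝ) (hε : 0 < ε)
    (hball : {y : X | q (y - x) < ε} ⊆ {z : X | q z = 0})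
    (𝒰 : Finset (Set X))
    (hopen : ∀ U ∈ 𝒰, IsOpen U)
    (hcover : ⋃₀ (𝒰 : Set (Set X)) = Set.univ) :
    (Set.univ : Set X) ∈ 𝒰 := by
  subst ht
  -- q 0 = 0
  have hq00 : q 0 = 0 := by
    have := hhom 0 x le_rfl
    simpa using this
  -- x itself is in θ
  have hxθ : q x = 0 := hball (by simp [Set.mem_setOf_eq, sub_self, hq00, hε])
  -- for any z, m • x + z ∈ θ for some m > 0
  have hA : ∀ z : X, ∃ m : ℝ, 0 < m ∧ q (m • x + z) = 0 := by
    intro z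
    have hqz := hnn z
    have hd : (0:ℝ) < q z + 1 := by linarith
    set s := ε / (q z + 1) with hs
    have hs0 : 0 < s := div_pos hε hd
    have hmem : x + s • z ∈ {y : X | q (y - x) < ε} := by
      simp only [Set.mem_setOf_eq, add_sub_cancel_left, hhom s z hs0.le]
      rw [hs, div_mul_eq_mul_div, div_lt_iff₀ hd]
      nlinarith
    have h1 : q (x + s • z) = 0 := hball hmem
    refine ⟨1/s, by positivity, ?_⟩
    have h2 := hhom (1/s) (x + s • z) (by positivity)
    rw [smul_add, smul_smul, one_div_mul_cancel hs0.ne', one_smul, h1, mul_zero] at h2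
    exact h2
  -- and then for all larger m
  have hB : ∀ z : X, ∃ m : ℝ, ∀ n : ℝ, m ≤ n → q (n • x + z) = 0 := by
    intro z
    obtain ⟨m, hm, hqm⟩ := hA z
    refine ⟨m, fun n hn => le_antisymm ?_ (hnn _)⟩
    have h2 : n • x + z = (n - m) • x + (m • x + z) := by
      rw [sub_smul]; abel
    calc q (n • x + z) ≤ q ((n - m) • x) + q (m • x + z) := by
            rw [h2]; exact htri _ _
      _ = (n - m) * q x + 0 := by rw [hhom _ _ (by linarith), hqm]
      _ = 0 := by rw [hxθ]; ring
  -- open sets absorb θ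
  have hopen' : ∀ U : Set X, TopologicalSpace.GenerateOpen
      {s : Set X | ∃ (c : X) (ε : ℝ), 0 < ε ∧ s = {y | q (y - c) < ε}} U →
      ∀ u ∈ U, ∀ w, q (w - u) = 0 → w ∈ U := by
    intro U hU
    induction hU with
    | basic s hs =>
      obtain ⟨c, δ, hδ, rfl⟩ := hs
      intro u hu w hw
      simp only [Set.mem_setOf_eq] at hu ⊢
      have : w - c = (w - u) + (u - c) := by abel
      calc q (w - c) ≤ q (w - u) + q (u - c) := by rw [this]; exact htri _ _
        _ < δ := by rw [hw]; linarith
      -- note: δ vs ε, fix below if needed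
    | univ => intro u _ w _; trivial
    | inter s t hs ht ihs iht =>
      intro u hu w hw
      exact ⟨ihs u hu.1 w hw, iht u hu.2 w hw⟩
    | sUnion S hS ih =>
      intro u hu w hw
      obtain ⟨s, hsS, hus⟩ := hu
      exact ⟨s, hsS, ih s hsS u hus w hw⟩
  -- choose a cover member for each -n • x
  have hchoice : ∀ n : ℕ, ∃ U, U ∈ 𝒰 ∧ (-(n:ℝ)) • x ∈ U := by
    intro n
    have : (-(n:ℝ)) • x ∈ ⋃₀ (𝒰 : Set (Set X)) := by rw [hcover]; trivial
    obtain ⟨U, hU, hm⟩ := this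
    exact ⟨U, hU, hm⟩
  choose f hf𝒰 hfmem using hchoice
  -- pigeonhole
  have : ∃ U : {U // U ∈ 𝒰}, Set.Infinite ((fun n => (⟨f n, hf𝒰 n⟩ : {U // U ∈ 𝒰})) ⁻¹' {U}) := by
    obtain ⟨U, hU⟩ := Finite.exists_infinite_fiber (fun n => (⟨f n, hf𝒰 n⟩ : {U // U ∈ 𝒰}))
    exact ⟨U, Set.infinite_coe_iff.mp hU⟩
  obtain ⟨⟨U, hU𝒰⟩, hinf⟩ := this
  have hUuniv : U = Set.univ := by
    ext z
    simp only [Set.mem_univ, iff_true]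
    obtain ⟨m, hqn⟩ := hB z
    obtain ⟨n, hn, hnm⟩ := hinf.exists_gt ⌈m⌉₊
    have hfn : f n = U := by
      have := hn
      simpa using congrArg Subtype.val this
    have hmn : m ≤ (n : ℝ) := by
      calc m ≤ (⌈m⌉₊ : ℝ) := Nat.le_ceil m
        _ ≤ (n : ℝ) := by exact_mod_cast hnm.le
    have hqzn : q (z - (-(n:ℝ)) • x) = 0 := by
      rw [neg_smul, sub_neg_eq_add, add_comm]
      exact hqn _ hmn
    exact hopen' U (hopen U hU𝒰) _ (hfn ▸ hfmem n) z hqzn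
  rwa [hUuniv] at hU𝒰
end

section
/- Let (X,q) be an asymmetric normed space such that θ_q = {x : q(x)=0} has nonempty interior in the topology of the norm q^s(x) = max{q(x),q(−x)}. Then the covering dimension of X (with the topology induced by q) is 0, and moreover X satisfies the T4 separation axiom. -/
/-- A topological space has covering dimension at most `n` if every finite open
cover has a finite open refinement, still covering, of order at most `n`
(i.e. no `n + 2` distinct members of the refinement have a common point). -/
def covDimLE (X : Type*) [TopologicalSpace X] (n : ℕ) : Prop :=
  ∀ 𝒰 : Finset (Set X), (∀ U ∈ 𝒰, IsOpen U) → ⋃₀ (𝒰 : Set (Set X)) = Set.univ →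
    ∃ 𝒱 : Finset (Set X), (∀ V ∈ 𝒱, IsOpen V) ∧ ⋃₀ (𝒱 : Set (Set X)) = Set.univ ∧
      (∀ V ∈ 𝒱, ∃ U ∈ 𝒰, V ⊆ U) ∧
      ∀ 𝒮 ⊆ 𝒱, n + 1 < 𝒮.card → ⋂₀ (𝒮 : Set (Set X)) = ∅

lemma aux_gen_add {X : Type*} [AddCommGroup X] (q : X → ℝ)
    (htri : ∀ x y, q (x + y) ≤ q x + q y) {U : Set X}
    (hU : TopologicalSpace.GenerateOpen
      {s : Set X | ∃ (c : X) (ε : ℝ), 0 < ε ∧ s = {y | q (y - c) < ε}} U) :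
    ∀ y ∈ U, ∀ z, q z = 0 → y + z ∈ U := by
  induction hU with
  | basic s hs =>
      obtain ⟨c, ε, hε, rfl⟩ := hs
      intro y hy z hz
      simp only [Set.mem_setOf_eq] at *
      have h1 : y + z - c = (y - c) + z := by abel
      rw [h1]
      calc q ((y - c) + z) ≤ q (y - c) + q z := htri _ _
        _ = q (y - c) := by rw [hz, add_zero]
        _ < ε := hy
  | univ => intro y _ z _; trivial
  | inter s u _ _ ihs ihu => exact fun y hy z hz => ⟨ihs y hy.1 z hz, ihu y hy.2 z hz⟩
  | sUnion S _ ih =>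
      intro y hy z hz
      obtain ⟨s, hsS, hys⟩ := hy
      exact ⟨s, hsS, ih s hsS y hys z hz⟩

/-- If θ_q has nonempty qˢ-interior, then the covering dimension
of (X, q) is 0 (it is ≤ 0 and X is nonempty) and X is T4 (normal). -/
theorem stmt_17 {X : Type*} [AddCommGroup X] [Module ℝ X]
    (q : X → ℝ)
    (hnn : ∀ x, 0 ≤ q x)
    (hhom : ∀ (a : ℝ) (x : X), 0 ≤ a → q (a • x) = a * q x)
    (htri : ∀ x y, q (x + y) ≤ q x + q y)
    (hsep : ∀ x, q x = 0 → q (-x) = 0 → x = 0)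
    [t : TopologicalSpace X]
    (ht : t = TopologicalSpace.generateFrom
      {s : Set X | ∃ (c : X) (ε : ℝ), 0 < ε ∧ s = {y | q (y - c) < ε}})
    (hint : ∃ (x : X) (ε : ℝ), 0 < ε ∧
      {y : X | max (q (y - x)) (q (x - y)) < ε} ⊆ {z : X | q z = 0}) :
    (covDimLE X 0 ∧ Nonempty X) ∧ NormalSpace X := by
  classical
  have hGen : ∀ U : Set X, IsOpen U → TopologicalSpace.GenerateOpen
      {s : Set X | ∃ (c : X) (ε : ℝ), 0 < ε ∧ s = {y | q (y - c) < ε}} U := by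
    intro U hU
    rw [ht] at hU
    exact hU
  obtain ⟨x, ε, hε, hball⟩ := hint
  have hball' : ∀ y : X, max (q (y - x)) (q (x - y)) < ε → q y = 0 := fun y h => hball h
  -- every vector is a difference of two elements of θ_q
  have hdec : ∀ v : X, ∃ a b : X, q a = 0 ∧ q b = 0 ∧ v = a - b := by
    intro v
    set M : ℝ := max (q v) (q (-v)) with hM
    have hM0 : 0 ≤ M := le_trans (hnn v) (le_max_left _ _)
    set s : ℝ := ε / (M + 1) with hs
    have hs0 : 0 < s := div_pos hε (by linarith)
    have hsM : s * M < ε := by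
      have h1 : s * (M + 1) = ε := div_mul_cancel₀ ε (by linarith)
      nlinarith
    have hqv : q (s • v) = s * q v := hhom s v hs0.le
    have hqnv : q (-(s • v)) = s * q (-v) := by
      rw [← smul_neg]; exact hhom s (-v) hs0.le
    have hA : q (x + s • v) = 0 := by
      apply hball'
      have e1 : x + s • v - x = s • v := by abel
      have e2 : x - (x + s • v) = -(s • v) := by abel
      rw [e1, e2, hqv, hqnv]
      apply max_lt
      · exact lt_of_le_of_lt (by nlinarith [le_max_left (q v) (q (-v))]) hsM |>.trans_le le_rfl
      · exact lt_of_le_of_lt (by nlinarith [le_max_right (q v) (q (-v))]) hsM |>.trans_le le_rfl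
    have hB : q (x - s • v) = 0 := by
      apply hball'
      have e1 : x - s • v - x = -(s • v) := by abel
      have e2 : x - (x - s • v) = s • v := by abel
      rw [e1, e2, hqv, hqnv]
      apply max_lt
      · exact lt_of_le_of_lt (by nlinarith [le_max_right (q v) (q (-v))]) hsM
      · exact lt_of_le_of_lt (by nlinarith [le_max_left (q v) (q (-v))]) hsM
    have h2s : (0:ℝ) < 2 * s := by linarith
    refine ⟨(2 * s)⁻¹ • (x + s • v), (2 * s)⁻¹ • (x - s • v), ?_, ?_, ?_⟩
    · rw [hhom _ _ (inv_nonneg.mpr h2s.le), hA, mul_zero]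
    · rw [hhom _ _ (inv_nonneg.mpr h2s.le), hB, mul_zero]
    · rw [← smul_sub]
      have e : (x + s • v) - (x - s • v) = (2 * s) • v := by
        rw [two_mul, add_smul]; abel
      rw [e, smul_smul, inv_mul_cancel₀ h2s.ne', one_smul]
  have hopen_add : ∀ U : Set X, IsOpen U → ∀ y ∈ U, ∀ z, q z = 0 → y + z ∈ U :=
    fun U hU => aux_gen_add q htri (hGen U hU)
  have hclosed_sub : ∀ C : Set X, IsClosed C → ∀ p ∈ C, ∀ z, q z = 0 → p - z ∈ C := by
    intro C hC p hp z hz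
    by_contra h
    have h2 : (p - z) + z ∈ Cᶜ := hopen_add _ hC.isOpen_compl (p - z) h z hz
    rw [sub_add_cancel] at h2
    exact h2 hp
  -- finite families of nonempty closed sets have a common point
  have hinter : ∀ F : Finset (Set X), (∀ C ∈ F, IsClosed C) → (∀ C ∈ F, C.Nonempty) →
      (⋂₀ (F : Set (Set X))).Nonempty := by
    intro F
    induction F using Finset.induction_on with
    | empty => intro _ _; simp
    | @insert A F' hA ih =>
        intro hcl hne
        obtain ⟨p, hp⟩ := ih (fun C hC => hcl C (Finset.mem_insert_of_mem hC))
          (fun C hC => hne C (Finset.mem_insert_of_mem hC))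
        obtain ⟨c, hc⟩ := hne A (Finset.mem_insert_self _ _)
        obtain ⟨u, w, hu, hw, huw⟩ := hdec (p - c)
        have key : p - u = c - w := by
          have := huw
          rw [sub_eq_sub_iff_sub_eq_sub] at this
          exact this
        refine ⟨p - u, ?_⟩
        rw [Finset.coe_insert, Set.sInter_insert]
        refine ⟨?_, ?_⟩
        · rw [key]
          exact hclosed_sub A (hcl A (Finset.mem_insert_self _ _)) c hc w hw
        · intro D hD
          exact hclosed_sub D (hcl D (Finset.mem_insert_of_mem hD)) p
            (Set.mem_sInter.mp hp D hD) u hu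
  refine ⟨⟨?_, ⟨0⟩⟩, ?_⟩
  · -- covering dimension ≤ 0
    intro 𝒰 hop hcov
    have huniv : ∃ U ∈ 𝒰, U = Set.univ := by
      by_contra h
      push_neg at h
      have hcl : ∀ C ∈ 𝒰.image compl, IsClosed C := by
        intro C hC
        obtain ⟨U, hU, rfl⟩ := Finset.mem_image.mp hC
        exact (hop U hU).isClosed_compl
      have hne : ∀ C ∈ 𝒰.image compl, C.Nonempty := by
        intro C hC
        obtain ⟨U, hU, rfl⟩ := Finset.mem_image.mp hC
        exact Set.nonempty_compl.mpr (h U hU)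
      obtain ⟨p, hp⟩ := hinter _ hcl hne
      have hp' : p ∈ ⋃₀ (𝒰 : Set (Set X)) := hcov ▸ Set.mem_univ p
      obtain ⟨U, hU, hpU⟩ := hp'
      have : p ∈ Uᶜ := Set.mem_sInter.mp hp Uᶜ (by
        simp only [Finset.coe_image, Set.mem_image, Finset.mem_coe]
        exact ⟨U, hU, rfl⟩)
      exact this hpU
    obtain ⟨U₀, hU₀, hU₀univ⟩ := huniv
    refine ⟨{Set.univ}, ?_, ?_, ?_, ?_⟩
    · intro V hV
      rw [Finset.mem_singleton] at hV
      rw [hV]; exact isOpen_univ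
    · simp
    · intro V hV
      rw [Finset.mem_singleton] at hV
      exact ⟨U₀, hU₀, by rw [hV, hU₀univ]⟩
    · intro 𝒮 h𝒮 hcard
      have : 𝒮.card ≤ 1 := le_trans (Finset.card_le_card h𝒮) (by simp)
      omega
  · -- normality
    constructor
    intro s' t' hs' ht' hdisj
    rcases s'.eq_empty_or_nonempty with rfl | hsne
    · exact ⟨∅, Set.univ, isOpen_empty, isOpen_univ, subset_rfl, Set.subset_univ _,
        disjoint_bot_left⟩
    rcases t'.eq_empty_or_nonempty with rfl | htne
    · exact ⟨Set.univ, ∅, isOpen_univ, isOpen_empty, Set.subset_univ _, subset_rfl,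
        disjoint_bot_right⟩
    exfalso
    obtain ⟨p, hp⟩ := hsne
    obtain ⟨c, hc⟩ := htne
    obtain ⟨u, w, hu, hw, huw⟩ := hdec (p - c)
    have key : p - u = c - w := by
      rw [sub_eq_sub_iff_sub_eq_sub] at huw
      exact huw
    have h1 : p - u ∈ s' := hclosed_sub s' hs' p hp u hu
    have h2 : p - u ∈ t' := key ▸ hclosed_sub t' ht' c hc w hw
    exact Set.disjoint_left.mp hdisj h1 h2
end

section
/- Let (X,q) be an asymmetric normed space, Y = span(θ_q), and Z a linear subspace with X = Y + Z. If Y is finite-dimensional, then for every finite open cover 𝒰 of X and every z ∈ Z there exists U ∈ 𝒰 such that the affine set Y + z is contained in U. -/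
theorem stmt_18 {X : Type*} [AddCommGroup X] [Module ℝ X]
    (q : X → ℝ)
    (hnn : ∀ x, 0 ≤ q x)
    (hhom : ∀ (a : ℝ) (x : X), 0 ≤ a → q (a • x) = a * q x)
    (htri : ∀ x y, q (x + y) ≤ q x + q y)
    (hsep : ∀ x, q x = 0 → q (-x) = 0 → x = 0)
    [t : TopologicalSpace X]
    (ht : t = TopologicalSpace.generateFrom
      {s : Set X | ∃ (c : X) (ε : ℝ), 0 < ε ∧ s = {y | q (y - c) < ε}})
    (Y Z : Submodule ℝ X)
    (hY : Y = Submodule.span ℝ {x : X | q x = 0})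
    (hYZ : Y ⊔ Z = ⊤)
    (hfd : FiniteDimensional ℝ Y)
    (𝒰 : Finset (Set X))
    (hopen : ∀ U ∈ 𝒰, IsOpen U)
    (hcover : ⋃₀ (𝒰 : Set (Set X)) = Set.univ) :
    ∀ z ∈ Z, ∃ U ∈ 𝒰, ∀ y ∈ Y, y + z ∈ U := by
  classical
  have hq0 : q 0 = 0 := by
    have := hhom 0 0 le_rfl
    simpa using this
  -- sums of q-zero elements are q-zero
  have hadd : ∀ a b, q a = 0 → q b = 0 → q (a + b) = 0 := by
    intro a b ha hb
    have := htri a b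
    rw [ha, hb] at this
    exact le_antisymm (by linarith) (hnn _)
  have hqsum : ∀ (s : Finset (Set X)) (f : Set X → X),
      (∀ i ∈ s, q (f i) = 0) → q (∑ i ∈ s, f i) = 0 := by
    intro s f
    induction s using Finset.induction_on with
    | empty => intro _; simpa using hq0
    | insert _ _ hx ih =>
      intro h
      rw [Finset.sum_insert hx]
      exact hadd _ _ (h _ (Finset.mem_insert_self _ _))
        (ih fun i hi => h i (Finset.mem_insert_of_mem hi))
  -- open sets absorb q-zero translations
  have habsorb : ∀ U : Set X, IsOpen U → ∀ p ∈ U, ∀ x, q x = 0 → p + x ∈ U := by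
    intro U hU
    rw [ht] at hU
    induction hU with
    | basic s hs =>
      obtain ⟨c, ε, hε, rfl⟩ := hs
      intro p hp x hx
      simp only [Set.mem_setOf_eq] at hp ⊢
      have h1 : q (x + (p - c)) ≤ q x + q (p - c) := htri _ _
      have h2 : p + x - c = x + (p - c) := by abel
      rw [h2, hx] at *
      linarith
    | univ => intro p _ x _; trivial
    | inter s u _ _ ihs ihu =>
      intro p hp x hx
      exact ⟨ihs p hp.1 x hx, ihu p hp.2 x hx⟩
    | sUnion S _ ih =>
      intro p hp x hx
      obtain ⟨s, hsS, hps⟩ := hp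
      exact ⟨s, hsS, ih s hsS p hps x hx⟩
  -- every element of Y is a difference of q-zero elements
  have hdecomp : ∀ y ∈ Y, ∃ a b, q a = 0 ∧ q b = 0 ∧ y = a - b := by
    rw [hY]
    intro y hy
    induction hy using Submodule.span_induction with
    | mem x hx => exact ⟨x, 0, hx, hq0, by simp⟩
    | zero => exact ⟨0, 0, hq0, hq0, by simp⟩
    | add u v _ _ ihu ihv =>
      obtain ⟨a, b, ha, hb, rfl⟩ := ihu
      obtain ⟨a', b', ha', hb', rfl⟩ := ihv
      exact ⟨a + a', b + b', hadd _ _ ha ha', hadd _ _ hb hb', by abel⟩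
    | smul r u _ ihu =>
      obtain ⟨a, b, ha, hb, rfl⟩ := ihu
      rcases le_or_gt 0 r with hr | hr
      · refine ⟨r • a, r • b, ?_, ?_, by rw [smul_sub]⟩
        · rw [hhom r a hr, ha, mul_zero]
        · rw [hhom r b hr, hb, mul_zero]
      · refine ⟨(-r) • b, (-r) • a, ?_, ?_, ?_⟩
        · rw [hhom (-r) b (by linarith), hb, mul_zero]
        · rw [hhom (-r) a (by linarith), ha, mul_zero]
        · rw [smul_sub, neg_smul, neg_smul, sub_neg_eq_add, neg_add_eq_sub, ← smul_sub]
  intro z _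
  by_contra hcon
  push_neg at hcon
  -- pick a bad point in each U and decompose it
  have hpick : ∀ U : Set X, ∃ a b, q a = 0 ∧ q b = 0 ∧ (U ∈ 𝒰 → (a - b) + z ∉ U) := by
    intro U
    by_cases hU : U ∈ 𝒰
    · obtain ⟨y, hyY, hyU⟩ := hcon U hU
      obtain ⟨a, b, ha, hb, rfl⟩ := hdecomp y hyY
      exact ⟨a, b, ha, hb, fun _ => hyU⟩
    · exact ⟨0, 0, hq0, hq0, fun h => absurd h hU⟩
  choose a b ha hb hbad using hpick
  set p : X := z - ∑ V ∈ 𝒰, b V with hp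
  have hpU : ∃ U ∈ 𝒰, p ∈ U := by
    have : p ∈ ⋃₀ (𝒰 : Set (Set X)) := by rw [hcover]; trivial
    obtain ⟨U, hU, hpU⟩ := this
    exact ⟨U, hU, hpU⟩
  obtain ⟨U, hU, hpUmem⟩ := hpU
  have hsum : q (a U + ∑ V ∈ 𝒰.erase U, b V) = 0 :=
    hadd _ _ (ha U) (hqsum _ _ fun i _ => hb i)
  have hmem := habsorb U (hopen U hU) p hpUmem _ hsum
  have heq : p + (a U + ∑ V ∈ 𝒰.erase U, b V) = (a U - b U) + z := by
    rw [hp]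
    have : ∑ V ∈ 𝒰, b V = b U + ∑ V ∈ 𝒰.erase U, b V :=
      (Finset.add_sum_erase _ _ hU).symm
    rw [this]
    abel
  rw [heq] at hmem
  exact hbad U hU hmem
end

section
/- Every asymmetric normed space satisfying the T_{1/4} separation axiom is T1. -/
theorem stmt_19 {X : Type*} [AddCommGroup X] [Module ℝ X]
    (q : X → ℝ)
    (hnn : ∀ x, 0 ≤ q x)
    (hhom : ∀ (a : ℝ) (x : X), 0 ≤ a → q (a • x) = a * q x)
    (htri : ∀ x y, q (x + y) ≤ q x + q y)
    (hsep : ∀ x, q x = 0 → q (-x) = 0 → x = 0)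
    [t : TopologicalSpace X]
    (ht : t = TopologicalSpace.generateFrom
      {s : Set X | ∃ (c : X) (ε : ℝ), 0 < ε ∧ s = {y | q (y - c) < ε}})
    (hT14 : ∀ (x : X) (s : Finset X), x ∉ s →
      ∃ U : Set X, IsOpen U ∧
        ((x ∈ U ∧ ∀ y ∈ s, y ∉ U) ∨ (x ∉ U ∧ ∀ y ∈ s, y ∈ U))) :
    T1Space X := by
  classical
  have hq0 : q 0 = 0 := by
    have := hhom 0 0 le_rfl
    simpa using this
  -- openness transfers along zero-distance pairs
  have key : ∀ U : Set X, IsOpen U → ∀ a b : X, q (a - b) = 0 → b ∈ U → a ∈ U := by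
    subst ht
    intro U hU
    induction hU with
    | basic s hs =>
        rintro a b hab hb
        obtain ⟨c, ε, hε, rfl⟩ := hs
        simp only [Set.mem_setOf_eq] at hb ⊢
        have h1 : q (a - c) ≤ q (a - b) + q (b - c) := by
          have := htri (a - b) (b - c)
          simpa using this
        rw [hab, zero_add] at h1
        exact lt_of_le_of_lt h1 hb
    | univ => intro a b _ _; trivial
    | inter s u hs hu ihs ihu =>
        intro a b hab hb
        exact ⟨ihs a b hab hb.1, ihu a b hab hb.2⟩
    | sUnion S hS ih =>
        rintro a b hab ⟨s, hs, hbs⟩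
        exact ⟨s, hs, ih s hs a b hab hbs⟩
  -- positivity of q on nonzero vectors
  have hpos : ∀ v : X, v ≠ 0 → 0 < q v := by
    intro v hv
    rcases lt_or_eq_of_le (hnn v) with h | h
    · exact h
    exfalso
    have hqv : q v = 0 := h.symm
    have hne1 : v ≠ v + v := by
      intro h'
      apply hv
      have : v + 0 = v + v := by simpa using h'
      simpa using (add_left_cancel this).symm
    have hmem : v ∉ ({0, v + v} : Finset X) := by
      simp [hv, hne1]
    obtain ⟨U, hUopen, hU⟩ := hT14 v {0, v + v} hmem
    rcases hU with ⟨hvU, hout⟩ | ⟨hvU, hin⟩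
    · have : v + v ∈ U := by
        apply key U hUopen (v + v) v _ hvU
        simpa using hqv
      exact hout (v + v) (by simp) this
    · have h0U : (0 : X) ∈ U := hin 0 (by simp)
      have : v ∈ U := by
        apply key U hUopen v 0 _ h0U
        simpa using hqv
      exact hvU this
  -- conclude T1
  rw [t1Space_iff_exists_open]
  intro x y hxy
  refine ⟨{z | q (z - x) < q (y - x)}, ?_, ?_, ?_⟩
  · rw [ht]
    exact TopologicalSpace.GenerateOpen.basic _
      ⟨x, q (y - x), hpos _ (sub_ne_zero.mpr hxy.symm), rfl⟩
  · simp [hq0, hpos _ (sub_ne_zero.mpr hxy.symm)]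
  · simp
end
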